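/- arXiv:2601.07502 — 2 statements merged into one kernel-verified Lean document; each statement's English description precedes it below -/
import Mathlib

section
/- In the multidimensional elephant random walk with stops, if r = 1/2, then Z_n*/(√n · log n) converges to 0 almost surely as n → ∞. -/
open MeasureTheory ProbabilityTheory Filter

noncomputable section

/-- The `d × d` cyclic permutation matrix `J_d` with ones on the superdiagonal and in
position `(d, 1)`. -/
def cyclicMatrix (d : ℕ) : Matrix (Fin d) (Fin d) ℝ :=
  Matrix.of fun i j => if (j : ℕ) = ((i : ℕ) + 1) % d then 1 else 0

/-- A matrix is measurable entrywise. -/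
instance {m n : Type*} : MeasurableSpace (Matrix m n ℝ) :=
  inferInstanceAs (MeasurableSpace (m → n → ℝ))

/-- The multidimensional elephant random walk with stops, with memory parameters
`p`, `q`, `r` satisfying `p + (2d-1)q + r = 1`. -/
structure MERWStops {Ω : Type*} [MeasurableSpace Ω] (P : Measure Ω)
    (d : ℕ) (p q r : ℝ) where
  X : ℕ → Ω → EuclideanSpace ℝ (Fin d)
  A : ℕ → Ω → Matrix (Fin d) (Fin d) ℝ
  β : ℕ → Ω → ℕ
  hd : 1 ≤ d
  hp : p ∈ Set.Icc (0 : ℝ) 1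
  hq : q ∈ Set.Icc (0 : ℝ) 1
  hr : r ∈ Set.Icc (0 : ℝ) 1
  hpqr : p + (2 * (d : ℝ) - 1) * q + r = 1
  measX : ∀ n, Measurable (X n)
  measA : ∀ n, Measurable (A n)
  measβ : ∀ n, Measurable (β n)
  /-- `X 1` is uniformly distributed on `{± e_1, …, ± e_d}`. -/
  hX1 : ∀ i : Fin d,
    P {ω | X 1 ω = EuclideanSpace.single i (1 : ℝ)} = ENNReal.ofReal (1 / (2 * (d : ℝ))) ∧
    P {ω | X 1 ω = -EuclideanSpace.single i (1 : ℝ)} = ENNReal.ofReal (1 / (2 * (d : ℝ)))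
  /-- The recursion `X (n+1) = A (n+1) * X (β n)`. -/
  hrec : ∀ n, 1 ≤ n → ∀ ω, ∀ i, X (n + 1) ω i = ∑ j, A (n + 1) ω i j * X (β n ω) ω j
  /-- `β n` is uniformly distributed on `{1, …, n}`. -/
  hβ : ∀ n, 1 ≤ n → ∀ k ∈ Finset.Icc 1 n, P {ω | β n ω = k} = ENNReal.ofReal (1 / (n : ℝ))
  hAI : ∀ n, 1 ≤ n → P {ω | A (n + 1) ω = 1} = ENNReal.ofReal p
  hAnegI : ∀ n, 1 ≤ n → P {ω | A (n + 1) ω = -1} = ENNReal.ofReal q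
  hAJ : ∀ n, 1 ≤ n → ∀ i ∈ Finset.Icc 1 (d - 1),
    P {ω | A (n + 1) ω = cyclicMatrix d ^ i} = ENNReal.ofReal q
  hAnegJ : ∀ n, 1 ≤ n → ∀ i ∈ Finset.Icc 1 (d - 1),
    P {ω | A (n + 1) ω = -(cyclicMatrix d ^ i)} = ENNReal.ofReal q
  hAzero : ∀ n, 1 ≤ n → P {ω | A (n + 1) ω = 0} = ENNReal.ofReal r
  /-- `A (n+1)`, `β n` and `σ(X_1, …, X_n)` are mutually independent. -/
  hindep : ∀ n, 1 ≤ n →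
    iIndep
      ![MeasurableSpace.comap (A (n + 1)) inferInstance,
        MeasurableSpace.comap (β n) inferInstance,
        ⨆ k ∈ Finset.Icc 1 n, MeasurableSpace.comap (X k) inferInstance] P

namespace MERWStops

variable {Ω : Type*} [MeasurableSpace Ω] {P : Measure Ω} {d : ℕ} {p q r : ℝ}

/-- The number of moves up to time `n` : `Z_n* = ∑_{k=1}^n ‖X_k‖²`. -/
def Zstar (W : MERWStops P d p q r) (n : ℕ) (ω : Ω) : ℝ :=
  ∑ k ∈ Finset.Icc 1 n, ‖W.X k ω‖ ^ 2

/-- The σ-field `G_n = σ(X_1, …, X_n)`. -/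
def G (W : MERWStops P d p q r) (n : ℕ) : MeasurableSpace Ω :=
  ⨆ k ∈ Finset.Icc 1 n, MeasurableSpace.comap (W.X k) inferInstance

/-- The normalizing sequence `a_1 = 1`, `a_n = ∏_{k=1}^{n-1} (1 + (1-r)/k)`. -/
def aseq (r : ℝ) (n : ℕ) : ℝ :=
  ∏ k ∈ Finset.Icc 1 (n - 1), (1 + (1 - r) / (k : ℝ))

end MERWStops

set_option linter.unusedSectionVars false

open Topology

lemma normsq_stronglyMeasurable {α : Type*} [m : MeasurableSpace α] {n : ℕ}
    {f : α → EuclideanSpace ℝ (Fin n)} (hf : Measurable f) :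
    StronglyMeasurable fun ω => ‖f ω‖ ^ 2 :=
  ((hf.norm).pow_const 2).stronglyMeasurable

lemma cyclic_pow_apply {d : ℕ} (i : ℕ) (a b : Fin d) :
    (cyclicMatrix d ^ i) a b = if (b : ℕ) = ((a : ℕ) + i) % d then 1 else 0 := by
  have hd : 0 < d := a.pos
  induction i generalizing b with
  | zero =>
    simp only [pow_zero, Nat.add_zero, Nat.mod_eq_of_lt a.isLt]
    rw [Matrix.one_apply]
    by_cases h : a = b
    · simp [h]
    · have : (b : ℕ) ≠ (a : ℕ) := fun hc => h (Fin.ext hc.symm)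
      simp [h, this]
  | succ i ih =>
    rw [pow_succ, Matrix.mul_apply]
    set c0 : Fin d := ⟨((a : ℕ) + i) % d, Nat.mod_lt _ hd⟩ with hc0
    have hsum : ∀ c : Fin d, (cyclicMatrix d ^ i) a c * cyclicMatrix d c b
        = if c = c0 then cyclicMatrix d c0 b else 0 := by
      intro c
      rw [ih]
      by_cases h : c = c0
      · subst h; simp [hc0]
      · have : (c : ℕ) ≠ ((a : ℕ) + i) % d := by
          intro hc; exact h (Fin.ext (by simpa using hc))
        simp [this, h]
    rw [Finset.sum_congr rfl fun c _ => hsum c, Finset.sum_ite_eq' Finset.univ c0]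
    simp only [Finset.mem_univ, if_true]
    show (if (b : ℕ) = ((c0 : ℕ) + 1) % d then (1:ℝ) else 0) = _
    have : ((c0 : ℕ) + 1) % d = ((a : ℕ) + (i + 1)) % d := by
      show ((((a:ℕ) + i) % d) + 1) % d = _
      have := (Nat.mod_modEq ((a:ℕ) + i) d).add_right 1
      simpa [Nat.add_assoc] using this.symm
    rw [this]

lemma cyclic_pow_row {d : ℕ} (hd : 0 < d) (i : ℕ) (a : Fin d) (v : Fin d → ℝ) :
    ∑ j, (cyclicMatrix d ^ i) a j * v j = v ⟨((a : ℕ) + i) % d, Nat.mod_lt _ hd⟩ := by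
  set b0 : Fin d := ⟨((a : ℕ) + i) % d, Nat.mod_lt _ hd⟩ with hb0
  have : ∀ j : Fin d, (cyclicMatrix d ^ i) a j * v j = if j = b0 then v b0 else 0 := by
    intro j
    rw [cyclic_pow_apply]
    by_cases h : j = b0
    · subst h; simp [hb0]
    · have : (j : ℕ) ≠ ((a : ℕ) + i) % d := fun hc => h (Fin.ext (by simpa using hc))
      simp [this, h]
  rw [Finset.sum_congr rfl fun j _ => this j, Finset.sum_ite_eq' Finset.univ b0]
  simp

/-- summing squares over a cyclic shift -/
lemma sum_sq_shift {d : ℕ} (hd : 0 < d) (i : ℕ) (v : Fin d → ℝ) :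
    ∑ a : Fin d, v ⟨((a : ℕ) + i) % d, Nat.mod_lt _ hd⟩ ^ 2 = ∑ a : Fin d, v a ^ 2 := by
  haveI : NeZero d := ⟨hd.ne'⟩
  refine Fintype.sum_equiv (Equiv.addRight (Fin.ofNat d i)) _ _ fun a => ?_
  congr 1
  · congr 1
    apply Fin.ext
    simp [Fin.add_def, Nat.add_mod, Nat.mod_mod_of_dvd]

/-- The finite set of possible values of the random matrices. -/
def matSet (d : ℕ) : Finset (Matrix (Fin d) (Fin d) ℝ) :=
  ({1, -1, 0} ∪ (Finset.Icc 1 (d-1)).image (fun i => cyclicMatrix d ^ i))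
    ∪ (Finset.Icc 1 (d-1)).image (fun i => -(cyclicMatrix d ^ i))

lemma cyclic_pow_entry_e0 {d : ℕ} (hd : 0 < d) {i : ℕ} (hi : i < d) (b : Fin d) :
    (cyclicMatrix d ^ i) ⟨0, hd⟩ b = if (b : ℕ) = i then 1 else 0 := by
  rw [cyclic_pow_apply]
  simp [Nat.mod_eq_of_lt hi]

lemma cyclic_pow_ne_one {d : ℕ} (hd : 0 < d) {i : ℕ} (hi1 : 1 ≤ i) (hi : i < d) :
    cyclicMatrix d ^ i ≠ 1 := by
  intro h
  have h1 := congrFun (congrFun h ⟨0, hd⟩) ⟨0, hd⟩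
  rw [cyclic_pow_entry_e0 hd hi, Matrix.one_apply_eq] at h1
  split_ifs at h1 with hc
  · exact absurd (show (0:ℕ) = i from hc) (by omega)
  · norm_num at h1

lemma cyclic_pow_e0_i {d : ℕ} (hd : 0 < d) {i : ℕ} (hi : i < d) :
    (cyclicMatrix d ^ i) ⟨0, hd⟩ ⟨i, hi⟩ = 1 := by
  rw [cyclic_pow_entry_e0 hd hi]; simp

lemma cyclic_pow_ne_negone {d : ℕ} (hd : 0 < d) {i : ℕ} (hi : i < d) :
    cyclicMatrix d ^ i ≠ -1 := by
  intro h
  have h1 := congrFun (congrFun h ⟨0, hd⟩) ⟨0, hd⟩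
  rw [cyclic_pow_entry_e0 hd hi] at h1
  have h2 : (-1 : Matrix (Fin d) (Fin d) ℝ) ⟨0, hd⟩ ⟨0, hd⟩ = -1 := by
    rw [Matrix.neg_apply, Matrix.one_apply_eq]
  rw [h2] at h1
  split_ifs at h1 <;> norm_num at h1

lemma cyclic_pow_ne_zero {d : ℕ} (hd : 0 < d) {i : ℕ} (hi : i < d) :
    cyclicMatrix d ^ i ≠ 0 := by
  intro h
  have h1 := congrFun (congrFun h ⟨0, hd⟩) ⟨i, hi⟩
  rw [cyclic_pow_e0_i hd hi] at h1
  norm_num at h1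

lemma cyclic_pow_inj {d : ℕ} (hd : 0 < d) {i k : ℕ} (hi : i < d) (hk : k < d)
    (h : cyclicMatrix d ^ i = cyclicMatrix d ^ k) : i = k := by
  have h1 := congrFun (congrFun h ⟨0, hd⟩) ⟨i, hi⟩
  rw [cyclic_pow_e0_i hd hi, cyclic_pow_entry_e0 hd hk] at h1
  split_ifs at h1 with hc
  · exact hc
  · norm_num at h1

lemma cyclic_pow_ne_neg {d : ℕ} (hd : 0 < d) {i k : ℕ} (hi : i < d) (hk : k < d) :
    cyclicMatrix d ^ i ≠ -(cyclicMatrix d ^ k) := by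
  intro h
  have h1 := congrFun (congrFun h ⟨0, hd⟩) ⟨i, hi⟩
  rw [cyclic_pow_e0_i hd hi, Matrix.neg_apply, cyclic_pow_entry_e0 hd hk] at h1
  split_ifs at h1 <;> norm_num at h1

lemma rowsum_neg {d : ℕ} (M : Matrix (Fin d) (Fin d) ℝ) (a : Fin d) (v : Fin d → ℝ) :
    ∑ j, (-M) a j * v j = -∑ j, M a j * v j := by
  rw [← Finset.sum_neg_distrib]
  refine Finset.sum_congr rfl fun j _ => ?_
  rw [Matrix.neg_apply, neg_mul]

lemma cyclic_rows_sq {d : ℕ} (hd : 0 < d) (i : ℕ) (v : Fin d → ℝ) :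
    ∑ a, (∑ j, (cyclicMatrix d ^ i) a j * v j) ^ 2 = ∑ j, v j ^ 2 := by
  have : ∀ a : Fin d, ∑ j, (cyclicMatrix d ^ i) a j * v j
      = v ⟨((a : ℕ) + i) % d, Nat.mod_lt _ hd⟩ := fun a => cyclic_pow_row hd i a v
  rw [Finset.sum_congr rfl fun a _ => by rw [this a]]
  exact sum_sq_shift hd i v

lemma matSet_sq {d : ℕ} (hd : 0 < d) {M : Matrix (Fin d) (Fin d) ℝ} (hM : M ∈ matSet d)
    (v : Fin d → ℝ) :
    ∑ a, (∑ j, M a j * v j) ^ 2 = if M = 0 then 0 else ∑ j, v j ^ 2 := by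
  haveI : Nonempty (Fin d) := ⟨⟨0, hd⟩⟩
  simp only [matSet, Finset.mem_union, Finset.mem_insert, Finset.mem_singleton,
    Finset.mem_image, Finset.mem_Icc] at hM
  rcases hM with ((h1 | h2 | h0) | ⟨i, hi, hJ⟩) | ⟨i, hi, hJ⟩
  · subst h1
    rw [if_neg (one_ne_zero)]
    have := cyclic_rows_sq hd 0 v
    rwa [pow_zero] at this
  · subst h2
    rw [if_neg (by simpa using (one_ne_zero (α := Matrix (Fin d) (Fin d) ℝ)))]
    have h := cyclic_rows_sq hd 0 v
    rw [pow_zero] at h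
    rw [show (-1 : Matrix (Fin d) (Fin d) ℝ) = -(1) from rfl]
    simp only [rowsum_neg, neg_sq]
    simpa using h
  · subst h0
    simp
  · subst hJ
    rw [if_neg (cyclic_pow_ne_zero hd (by omega))]
    exact cyclic_rows_sq hd i v
  · subst hJ
    rw [if_neg (by
      intro h
      exact cyclic_pow_ne_zero hd (show i < d by omega) (by rw [← neg_neg (cyclicMatrix d ^ i), h, neg_zero]))]
    simp only [rowsum_neg, neg_sq]
    have := cyclic_rows_sq hd i v
    simpa using this

lemma ae_mem_of_sum_eq_one {Ω : Type*} [MeasurableSpace Ω] {P : Measure Ω}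
    [IsProbabilityMeasure P] {ι : Type*} {s : Finset ι} {f : ι → Set Ω}
    (hm : ∀ i ∈ s, MeasurableSet (f i)) (hd : (s : Set ι).PairwiseDisjoint f)
    (hsum : ∑ i ∈ s, P (f i) = 1) : ∀ᵐ ω ∂P, ∃ i ∈ s, ω ∈ f i := by
  have hU : P (⋃ i ∈ s, f i) = 1 := by
    rw [measure_biUnion_finset hd hm]; exact hsum
  have hmeasU : MeasurableSet (⋃ i ∈ s, f i) := s.measurableSet_biUnion hm
  rw [ae_iff]
  have : {ω | ¬∃ i ∈ s, ω ∈ f i} = (⋃ i ∈ s, f i)ᶜ := by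
    ext ω; simp
  rw [this, measure_compl hmeasU (measure_ne_top _ _), hU, measure_univ, tsub_self]

lemma euclidean_norm_sq {d : ℕ} (x : EuclideanSpace ℝ (Fin d)) :
    ‖x‖ ^ 2 = ∑ i, x i ^ 2 := by
  rw [EuclideanSpace.norm_eq, Real.sq_sqrt (by positivity)]
  exact Finset.sum_congr rfl fun i _ => by rw [Real.norm_eq_abs, sq_abs]


namespace MERWStops

variable {Ω : Type*} [MeasurableSpace Ω] {P : Measure Ω} [IsProbabilityMeasure P]
  {d : ℕ} {p q r : ℝ} (W : MERWStops P d p q r)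

instance matSingleton {d : ℕ} : MeasurableSingletonClass (Matrix (Fin d) (Fin d) ℝ) :=
  inferInstanceAs (MeasurableSingletonClass (Fin d → Fin d → ℝ))

lemma ae_A_mem (n : ℕ) (hn : 1 ≤ n) : ∀ᵐ ω ∂P, W.A (n + 1) ω ∈ matSet d := by
  have hd : 0 < d := W.hd
  set f : Matrix (Fin d) (Fin d) ℝ → Set Ω := fun M => {ω | W.A (n + 1) ω = M} with hf
  have hm : ∀ M ∈ matSet d, MeasurableSet (f M) := fun M _ =>
    (W.measA (n + 1)) (measurableSet_singleton M)
  have hdisj : ((matSet d : Finset _) : Set _).PairwiseDisjoint f := by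
    intro M _ M' _ hMM'
    refine Set.disjoint_left.2 fun ω h1 h2 => hMM' ?_
    rw [← h1, ← h2]
  -- the individual probabilities
  have hq0 : 0 ≤ q := W.hq.1
  have hsum : ∑ M ∈ matSet d, P (f M) = 1 := by
    have hdisj1 : Disjoint ({1, -1, 0} : Finset (Matrix (Fin d) (Fin d) ℝ))
        ((Finset.Icc 1 (d-1)).image fun i => cyclicMatrix d ^ i) := by
      rw [Finset.disjoint_right]
      intro M hM hM'
      simp only [Finset.mem_image, Finset.mem_Icc] at hM
      obtain ⟨i, ⟨hi1, hi2⟩, rfl⟩ := hM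
      have hid : i < d := by omega
      simp only [Finset.mem_insert, Finset.mem_singleton] at hM'
      rcases hM' with h | h | h
      · exact cyclic_pow_ne_one hd hi1 hid h
      · exact cyclic_pow_ne_negone hd hid h
      · exact cyclic_pow_ne_zero hd hid h
    have hdisj2 : Disjoint (({1, -1, 0} : Finset (Matrix (Fin d) (Fin d) ℝ))
          ∪ (Finset.Icc 1 (d-1)).image (fun i => cyclicMatrix d ^ i))
        ((Finset.Icc 1 (d-1)).image fun i => -(cyclicMatrix d ^ i)) := by
      rw [Finset.disjoint_right]
      intro M hM hM'
      simp only [Finset.mem_image, Finset.mem_Icc] at hM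
      obtain ⟨i, ⟨hi1, hi2⟩, rfl⟩ := hM
      have hid : i < d := by omega
      simp only [Finset.mem_union, Finset.mem_insert, Finset.mem_singleton,
        Finset.mem_image, Finset.mem_Icc] at hM'
      rcases hM' with (h | h | h) | ⟨k, ⟨hk1, hk2⟩, hk⟩
      · exact cyclic_pow_ne_negone hd hid (by
          have := congrArg Neg.neg h; rwa [neg_neg] at this)
      · exact cyclic_pow_ne_one hd hi1 hid (by
          have := congrArg Neg.neg h; rwa [neg_neg, neg_neg] at this)
      · exact cyclic_pow_ne_zero hd hid (by
          have := congrArg Neg.neg h; rwa [neg_neg, neg_zero] at this)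
      · exact cyclic_pow_ne_neg hd (show k < d by omega) hid hk
    have hinjJ : Set.InjOn (fun i => cyclicMatrix d ^ i) (Finset.Icc 1 (d-1)) := by
      intro i hi k hk h
      simp only [Finset.coe_Icc, Set.mem_Icc] at hi hk
      exact cyclic_pow_inj hd (by omega) (by omega) h
    have hinjnJ : Set.InjOn (fun i => -(cyclicMatrix d ^ i)) (Finset.Icc 1 (d-1)) := by
      intro i hi k hk h
      simp only [Finset.coe_Icc, Set.mem_Icc] at hi hk
      refine cyclic_pow_inj hd (by omega) (by omega) ?_
      have := congrArg Neg.neg h; simpa using this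
    rw [matSet, Finset.sum_union hdisj2, Finset.sum_union hdisj1,
      Finset.sum_image hinjJ, Finset.sum_image hinjnJ]
    have h1 : ∑ M ∈ ({1, -1, 0} : Finset (Matrix (Fin d) (Fin d) ℝ)), P (f M)
        = ENNReal.ofReal p + ENNReal.ofReal q + ENNReal.ofReal r := by
      have hne1 : (1 : Matrix (Fin d) (Fin d) ℝ) ∉ ({-1, 0} : Finset _) := by
        haveI : Nonempty (Fin d) := ⟨⟨0, hd⟩⟩
        simp only [Finset.mem_insert, Finset.mem_singleton]
        push_neg
        constructor
        · intro h
          have := congrFun (congrFun h ⟨0, hd⟩) ⟨0, hd⟩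
          rw [Matrix.one_apply_eq] at this
          have h2 : (-1 : Matrix (Fin d) (Fin d) ℝ) ⟨0, hd⟩ ⟨0, hd⟩ = -1 := by
            rw [Matrix.neg_apply, Matrix.one_apply_eq]
          rw [h2] at this; norm_num at this
        · exact one_ne_zero
      have hne2 : (-1 : Matrix (Fin d) (Fin d) ℝ) ∉ ({0} : Finset _) := by
        simp only [Finset.mem_singleton]
        intro h
        have := congrFun (congrFun h ⟨0, hd⟩) ⟨0, hd⟩
        have h2 : (-1 : Matrix (Fin d) (Fin d) ℝ) ⟨0, hd⟩ ⟨0, hd⟩ = -1 := by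
          rw [Matrix.neg_apply, Matrix.one_apply_eq]
        rw [h2] at this
        norm_num at this
      rw [show ({1, -1, 0} : Finset (Matrix (Fin d) (Fin d) ℝ))
          = insert 1 (insert (-1) {0}) from rfl,
        Finset.sum_insert hne1, Finset.sum_insert hne2, Finset.sum_singleton]
      rw [W.hAI n hn, W.hAnegI n hn, W.hAzero n hn, add_assoc]
    rw [h1]
    have h2 : ∀ i ∈ Finset.Icc 1 (d-1), P (f (cyclicMatrix d ^ i)) = ENNReal.ofReal q :=
      fun i hi => W.hAJ n hn i hi
    have h3 : ∀ i ∈ Finset.Icc 1 (d-1), P (f (-(cyclicMatrix d ^ i))) = ENNReal.ofReal q :=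
      fun i hi => W.hAnegJ n hn i hi
    rw [Finset.sum_congr rfl h2, Finset.sum_congr rfl h3, Finset.sum_const,
      Nat.card_Icc]
    have hcard : (d - 1 + 1 - 1) = d - 1 := by omega
    rw [hcard]
    -- now pure ENNReal arithmetic
    have hp0 : 0 ≤ p := W.hp.1
    have hr0 : 0 ≤ r := W.hr.1
    have hofN : ((d - 1 : ℕ) : ENNReal) = ENNReal.ofReal ((d - 1 : ℕ) : ℝ) :=
      (ENNReal.ofReal_natCast _).symm
    have hx0 : 0 ≤ ((d - 1 : ℕ) : ℝ) * q := mul_nonneg (Nat.cast_nonneg _) hq0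
    rw [nsmul_eq_mul, hofN, ← ENNReal.ofReal_mul (Nat.cast_nonneg _)]
    rw [← ENNReal.ofReal_add hp0 hq0, ← ENNReal.ofReal_add (by linarith) hr0,
      ← ENNReal.ofReal_add (by linarith) hx0, ← ENNReal.ofReal_add (by linarith) hx0,
      ← ENNReal.ofReal_one]
    congr 1
    have hcast : ((d - 1 : ℕ) : ℝ) = (d : ℝ) - 1 := by
      rw [Nat.cast_sub W.hd]; norm_num
    have hpqr := W.hpqr
    rw [hcast]
    nlinarith [hpqr]
  filter_upwards [ae_mem_of_sum_eq_one hm hdisj hsum] with ω hω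
  obtain ⟨M, hM, hωM⟩ := hω
  rw [show W.A (n+1) ω = M from hωM]
  exact hM

lemma ae_beta_mem (n : ℕ) (hn : 1 ≤ n) : ∀ᵐ ω ∂P, W.β n ω ∈ Finset.Icc 1 n := by
  set f : ℕ → Set Ω := fun k => {ω | W.β n ω = k} with hf
  have hm : ∀ k ∈ Finset.Icc 1 n, MeasurableSet (f k) := fun k _ =>
    (W.measβ n) (measurableSet_singleton k)
  have hdisj : ((Finset.Icc 1 n : Finset ℕ) : Set ℕ).PairwiseDisjoint f := by
    intro k _ k' _ hkk'
    refine Set.disjoint_left.2 fun ω h1 h2 => hkk' ?_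
    rw [← h1, ← h2]
  have hsum : ∑ k ∈ Finset.Icc 1 n, P (f k) = 1 := by
    rw [Finset.sum_congr rfl fun k hk => W.hβ n hn k hk, Finset.sum_const, Nat.card_Icc]
    have hcard : n + 1 - 1 = n := by omega
    rw [hcard, nsmul_eq_mul, show ((n : ℕ) : ENNReal) = ENNReal.ofReal ((n : ℕ) : ℝ) from
      (ENNReal.ofReal_natCast _).symm, ← ENNReal.ofReal_mul (Nat.cast_nonneg _)]
    rw [mul_one_div, div_self ((Nat.cast_pos.2 hn).ne' : (n:ℝ) ≠ 0), ENNReal.ofReal_one]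
  filter_upwards [ae_mem_of_sum_eq_one hm hdisj hsum] with ω hω
  obtain ⟨k, hk, hωk⟩ := hω
  rw [show W.β n ω = k from hωk]
  exact hk

lemma ae_X1_norm : ∀ᵐ ω ∂P, ‖W.X 1 ω‖ = 1 := by
  have hd : 0 < d := W.hd
  classical
  set V : Finset (EuclideanSpace ℝ (Fin d)) :=
    (Finset.univ.image fun i : Fin d => EuclideanSpace.single i (1:ℝ))
      ∪ (Finset.univ.image fun i : Fin d => -EuclideanSpace.single i (1:ℝ)) with hV
  set f : EuclideanSpace ℝ (Fin d) → Set Ω := fun v => {ω | W.X 1 ω = v} with hf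
  have hm : ∀ v ∈ V, MeasurableSet (f v) := fun v _ =>
    (W.measX 1) (measurableSet_singleton v)
  have hdisj : ((V : Finset _) : Set _).PairwiseDisjoint f := by
    intro v _ v' _ hvv'
    refine Set.disjoint_left.2 fun ω h1 h2 => hvv' ?_
    rw [← h1, ← h2]
  have hsingle_ne : ∀ i j : Fin d,
      EuclideanSpace.single i (1:ℝ) ≠ -EuclideanSpace.single j (1:ℝ) := by
    intro i j h
    have := congrArg (fun x => x i) h
    have h1 : EuclideanSpace.single i (1:ℝ) i = 1 := by
      simp [EuclideanSpace.single_apply]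
    have h2 : (-EuclideanSpace.single j (1:ℝ)) i = -(EuclideanSpace.single j (1:ℝ) i) := rfl
    rw [h1, h2] at this
    rw [EuclideanSpace.single_apply] at this
    split_ifs at this <;> norm_num at this
  have hinj : Function.Injective fun i : Fin d => EuclideanSpace.single i (1:ℝ) := by
    intro i j h
    have := congrArg (fun x => x i) h
    simp only [EuclideanSpace.single_apply] at this
    by_contra hij
    simp [hij] at this
  have hinjneg : Function.Injective fun i : Fin d => -EuclideanSpace.single i (1:ℝ) := by
    intro i j h
    have h2 : EuclideanSpace.single i (1:ℝ) = EuclideanSpace.single j (1:ℝ) := by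
      have := congrArg Neg.neg h; simpa using this
    exact hinj h2
  have hdisjV : Disjoint (Finset.univ.image fun i : Fin d => EuclideanSpace.single i (1:ℝ))
      (Finset.univ.image fun i : Fin d => -EuclideanSpace.single i (1:ℝ)) := by
    rw [Finset.disjoint_left]
    intro v hv hv'
    simp only [Finset.mem_image, Finset.mem_univ, true_and] at hv hv'
    obtain ⟨i, rfl⟩ := hv
    obtain ⟨j, hj⟩ := hv'
    exact hsingle_ne i j hj.symm
  have hsum : ∑ v ∈ V, P (f v) = 1 := by
    rw [hV, Finset.sum_union hdisjV, Finset.sum_image (fun i _ j _ h => hinj h),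
      Finset.sum_image (fun i _ j _ h => hinjneg h)]
    have h1 : ∀ i : Fin d, P (f (EuclideanSpace.single i (1:ℝ)))
        = ENNReal.ofReal (1 / (2 * (d:ℝ))) := fun i => (W.hX1 i).1
    have h2 : ∀ i : Fin d, P (f (-EuclideanSpace.single i (1:ℝ)))
        = ENNReal.ofReal (1 / (2 * (d:ℝ))) := fun i => (W.hX1 i).2
    rw [Finset.sum_congr rfl fun i _ => h1 i, Finset.sum_congr rfl fun i _ => h2 i,
      Finset.sum_const, Finset.card_univ, Fintype.card_fin, nsmul_eq_mul,
      show ((d : ℕ) : ENNReal) = ENNReal.ofReal ((d : ℕ) : ℝ) from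
        (ENNReal.ofReal_natCast _).symm, ← ENNReal.ofReal_mul (Nat.cast_nonneg _),
      ← ENNReal.ofReal_add (by positivity) (by positivity), ← ENNReal.ofReal_one]
    congr 1
    have hdne : (d : ℝ) ≠ 0 := Nat.cast_ne_zero.2 (by omega)
    field_simp
    ring
  filter_upwards [ae_mem_of_sum_eq_one hm hdisj hsum] with ω hω
  obtain ⟨v, hv, hωv⟩ := hω
  rw [show W.X 1 ω = v from hωv]
  rw [hV, Finset.mem_union] at hv
  rcases hv with hv | hv <;>
  · simp only [Finset.mem_image, Finset.mem_univ, true_and] at hv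
    obtain ⟨i, rfl⟩ := hv
    simp [EuclideanSpace.norm_single]

/-- abbreviation for the squared norm process -/
def Y (W : MERWStops P d p q r) (k : ℕ) (ω : Ω) : ℝ := ‖W.X k ω‖ ^ 2

lemma Y_nonneg (k : ℕ) (ω : Ω) : 0 ≤ W.Y k ω := by rw [Y]; positivity

lemma Zstar_eq_sum_Y (n : ℕ) (ω : Ω) : W.Zstar n ω = ∑ k ∈ Finset.Icc 1 n, W.Y k ω := rfl

lemma ae_good : ∀ᵐ ω ∂P, ‖W.X 1 ω‖ = 1 ∧
    ∀ n, 1 ≤ n → (W.A (n+1) ω ∈ matSet d ∧ W.β n ω ∈ Finset.Icc 1 n) := by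
  have h2 : ∀ᵐ ω ∂P, ∀ n, 1 ≤ n → W.A (n+1) ω ∈ matSet d := by
    rw [ae_all_iff]
    intro n
    rcases Nat.lt_or_ge n 1 with h | h
    · exact Filter.Eventually.of_forall fun ω hn => absurd hn (by omega)
    · filter_upwards [W.ae_A_mem n h] with ω hω _ using hω
  have h3 : ∀ᵐ ω ∂P, ∀ n, 1 ≤ n → W.β n ω ∈ Finset.Icc 1 n := by
    rw [ae_all_iff]
    intro n
    rcases Nat.lt_or_ge n 1 with h | h
    · exact Filter.Eventually.of_forall fun ω hn => absurd hn (by omega)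
    · filter_upwards [W.ae_beta_mem n h] with ω hω _ using hω
  filter_upwards [W.ae_X1_norm, h2, h3] with ω h1 h2 h3
  exact ⟨h1, fun n hn => ⟨h2 n hn, h3 n hn⟩⟩

lemma step_eq {ω : Ω} (n : ℕ) (hn : 1 ≤ n) (hA : W.A (n+1) ω ∈ matSet d) :
    W.Y (n+1) ω = if W.A (n+1) ω = 0 then 0 else W.Y (W.β n ω) ω := by
  have hd : 0 < d := W.hd
  rw [Y, euclidean_norm_sq]
  have hx : ∀ i, W.X (n+1) ω i = ∑ j, W.A (n+1) ω i j * W.X (W.β n ω) ω j := W.hrec n hn ω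
  rw [Finset.sum_congr rfl fun i _ => by rw [hx i]]
  rw [matSet_sq hd hA]
  by_cases h : W.A (n+1) ω = 0
  · simp [h]
  · rw [if_neg h, if_neg h, Y, euclidean_norm_sq]

lemma Y_le_one {ω : Ω} (h1 : ‖W.X 1 ω‖ = 1)
    (h : ∀ n, 1 ≤ n → (W.A (n+1) ω ∈ matSet d ∧ W.β n ω ∈ Finset.Icc 1 n)) :
    ∀ k, 1 ≤ k → W.Y k ω ≤ 1 := by
  intro k
  induction k using Nat.strong_induction_on with
  | _ k ih =>
    intro hk
    match k, hk with
    | 1, _ => rw [Y, h1]; norm_num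
    | (n+2), _ =>
      have hn : 1 ≤ n + 1 := by omega
      rw [show n + 2 = (n + 1) + 1 from rfl, W.step_eq (n+1) hn (h (n+1) hn).1]
      split_ifs
      · norm_num
      · have hβ := (h (n+1) hn).2
        rw [Finset.mem_Icc] at hβ
        exact ih _ (by omega) hβ.1

lemma measY (k : ℕ) : Measurable (W.Y k) := ((W.measX k).norm).pow_const 2

lemma ae_Y_le_one (k : ℕ) (hk : 1 ≤ k) : ∀ᵐ ω ∂P, W.Y k ω ≤ 1 := by
  filter_upwards [W.ae_good] with ω hω
  exact W.Y_le_one hω.1 hω.2 k hk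

lemma integrableY (k : ℕ) (hk : 1 ≤ k) : Integrable (W.Y k) P := by
  refine (integrable_const (1:ℝ)).mono' (W.measY k).aestronglyMeasurable ?_
  filter_upwards [W.ae_Y_le_one k hk] with ω hω
  rw [Real.norm_eq_abs, abs_of_nonneg (W.Y_nonneg k ω)]
  exact hω

lemma integrableZstar (n : ℕ) : Integrable (W.Zstar n) P := by
  have : W.Zstar n = fun ω => ∑ k ∈ Finset.Icc 1 n, W.Y k ω := rfl
  rw [this]
  exact integrable_finset_sum _ fun k hk => W.integrableY k (Finset.mem_Icc.1 hk).1

lemma G_le (n : ℕ) : W.G n ≤ (inferInstance : MeasurableSpace Ω) := by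
  rw [G]
  exact iSup_le fun k => iSup_le fun _ => (W.measX k).comap_le

lemma G_mono : Monotone W.G := by
  intro m n h
  rw [G, G]
  exact biSup_mono fun k hk => Finset.Icc_subset_Icc_right h hk

lemma measurableX_G {k n : ℕ} (hk : k ∈ Finset.Icc 1 n) : Measurable[W.G n] (W.X k) := by
  have hle : MeasurableSpace.comap (W.X k) inferInstance ≤ W.G n :=
    le_biSup (fun k => MeasurableSpace.comap (W.X k) inferInstance) hk
  exact fun s hs => hle _ ⟨s, hs, rfl⟩

lemma stronglyMeasurableY_G {k n : ℕ} (hk : k ∈ Finset.Icc 1 n) :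
    StronglyMeasurable[W.G n] (W.Y k) :=
  @normsq_stronglyMeasurable Ω (W.G n) d _ (W.measurableX_G hk)

lemma stronglyMeasurableZstar_G (n : ℕ) : StronglyMeasurable[W.G n] (W.Zstar n) := by
  have : W.Zstar n = fun ω => ∑ k ∈ Finset.Icc 1 n, W.Y k ω := rfl
  rw [this]
  exact Finset.stronglyMeasurable_fun_sum _ fun k hk => W.stronglyMeasurableY_G hk

/-- the σ-algebra generated by `A (n+1)` -/
def mA (W : MERWStops P d p q r) (n : ℕ) : MeasurableSpace Ω :=
  MeasurableSpace.comap (W.A (n+1)) inferInstance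

/-- the σ-algebra generated by `β n` -/
def mB (W : MERWStops P d p q r) (n : ℕ) : MeasurableSpace Ω :=
  MeasurableSpace.comap (W.β n) inferInstance

lemma condexp_Y_succ (n : ℕ) (hn : 1 ≤ n) :
    P[W.Y (n+1) | W.G n] =ᵐ[P] fun ω => ((1 - r) / n) * W.Zstar n ω := by
  classical
  have hm : W.G n ≤ (inferInstance : MeasurableSpace Ω) := W.G_le n
  have hm1 : W.mA n ≤ (inferInstance : MeasurableSpace Ω) := (W.measA (n+1)).comap_le
  have hm2 : W.mB n ≤ (inferInstance : MeasurableSpace Ω) := (W.measβ n).comap_le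
  have hiI : iIndep (![W.mA n, W.mB n, W.G n] : Fin 3 → MeasurableSpace Ω) P := by
    have h := W.hindep n hn
    have he : (![W.mA n, W.mB n, W.G n] : Fin 3 → MeasurableSpace Ω)
        = ![MeasurableSpace.comap (W.A (n + 1)) inferInstance,
            MeasurableSpace.comap (W.β n) inferInstance,
            ⨆ k ∈ Finset.Icc 1 n, MeasurableSpace.comap (W.X k) inferInstance] := rfl
    rw [he]
    exact h
  have hIndep12 : Indep (W.mA n) (W.mB n) P := by
    have h := hiI.indep (show (0 : Fin 3) ≠ 1 by decide)
    exact h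
  have hIndepSup : Indep (W.mA n ⊔ W.mB n) (W.G n) P := by
    have hle : ∀ i : Fin 3, (![W.mA n, W.mB n, W.G n] : Fin 3 → MeasurableSpace Ω) i
        ≤ (inferInstance : MeasurableSpace Ω) := by
      intro i
      fin_cases i
      · exact hm1
      · exact hm2
      · exact hm
    have h := indep_iSup_of_disjoint hle hiI
      (S := ({0, 1} : Set (Fin 3))) (T := ({2} : Set (Fin 3)))
      (by simp [Set.disjoint_left])
    have e1 : (⨆ i ∈ ({0, 1} : Set (Fin 3)),
          (![W.mA n, W.mB n, W.G n] : Fin 3 → MeasurableSpace Ω) i) = W.mA n ⊔ W.mB n := by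
      rw [show ({0, 1} : Set (Fin 3)) = insert 0 {1} from rfl, iSup_insert, iSup_singleton]
      rfl
    have e2 : (⨆ i ∈ ({2} : Set (Fin 3)),
          (![W.mA n, W.mB n, W.G n] : Fin 3 → MeasurableSpace Ω) i) = W.G n := by
      rw [iSup_singleton]
      rfl
    rw [e1, e2] at h
    exact h
  -- the indicator functions
  set s1 : Set Ω := {ω | W.A (n+1) ω ≠ 0} with hs1def
  set sk : ℕ → Set Ω := fun k => {ω | W.β n ω = k} with hskdef
  set φ : ℕ → Ω → ℝ := fun k => (s1 ∩ sk k).indicator (1 : Ω → ℝ) with hφdef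
  have hs1_m1 : MeasurableSet[W.mA n] s1 := ⟨{0}ᶜ, (measurableSet_singleton 0).compl, rfl⟩
  have hsk_m2 : ∀ k, MeasurableSet[W.mB n] (sk k) := fun k =>
    ⟨{k}, measurableSet_singleton k, rfl⟩
  have hmeas_sup : ∀ k, MeasurableSet[W.mA n ⊔ W.mB n] (s1 ∩ sk k) := fun k =>
    MeasurableSet.inter ((le_sup_left : W.mA n ≤ W.mA n ⊔ W.mB n) _ hs1_m1)
      ((le_sup_right : W.mB n ≤ W.mA n ⊔ W.mB n) _ (hsk_m2 k))
  have hmeas_amb : ∀ k, MeasurableSet (s1 ∩ sk k) := fun k =>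
    ((W.measA (n+1)) ((measurableSet_singleton 0).compl)).inter
      ((W.measβ n) (measurableSet_singleton k))
  have hφ_sm : ∀ k, StronglyMeasurable[W.mA n ⊔ W.mB n] (φ k) := fun k =>
    stronglyMeasurable_const.indicator (hmeas_sup k)
  have hφ_int : ∀ k, Integrable (φ k) P := fun k =>
    (integrable_const (1 : ℝ)).indicator (hmeas_amb k)
  have hφ_le : ∀ k ω, |φ k ω| ≤ 1 := by
    intro k ω
    by_cases h : ω ∈ s1 ∩ sk k
    · simp [hφdef, Set.indicator_of_mem h]
    · simp [hφdef, Set.indicator_of_notMem h]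
  -- value of integral of φ k
  have hφ_integral : ∀ k ∈ Finset.Icc 1 n, ∫ ω, φ k ω ∂P = (1 - r) / n := by
    intro k hk
    rw [hφdef]
    rw [integral_indicator_one (hmeas_amb k)]
    have hprod := (Indep_iff (W.mA n) (W.mB n) P).1 hIndep12 s1 (sk k) hs1_m1 (hsk_m2 k)
    have hPs1 : P s1 = 1 - ENNReal.ofReal r := by
      have hc : s1 = (W.A (n+1) ⁻¹' {0})ᶜ := by
        ext ω; simp [hs1def]
      have hz : P (W.A (n+1) ⁻¹' {0}) = ENNReal.ofReal r := by
        rw [show W.A (n+1) ⁻¹' {0} = {ω | W.A (n+1) ω = 0} by ext ω; simp]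
        exact W.hAzero n hn
      rw [hc, measure_compl ((W.measA (n+1)) (measurableSet_singleton 0)) (measure_ne_top _ _),
        hz, measure_univ]
    have hPsk : P (sk k) = ENNReal.ofReal (1 / n) := W.hβ n hn k hk
    rw [measureReal_def, hprod, hPs1, hPsk]
    have h1r : (1 : ENNReal) - ENNReal.ofReal r = ENNReal.ofReal (1 - r) := by
      rw [ENNReal.ofReal_sub 1 W.hr.1, ENNReal.ofReal_one]
    rw [h1r, ← ENNReal.ofReal_mul (by linarith [W.hr.2])]
    rw [ENNReal.toReal_ofReal (by
      have h1 : (0:ℝ) ≤ 1 - r := by linarith [W.hr.2]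
      positivity)]
    rw [mul_one_div]
  -- conditional expectation of φ k
  have hcond_φ : ∀ k ∈ Finset.Icc 1 n,
      P[φ k | W.G n] =ᵐ[P] fun _ => (1 - r) / n := by
    intro k hk
    have h := condExp_indep_eq (μ := P) (sup_le hm1 hm2) hm (hφ_sm k) hIndepSup
    rw [hφ_integral k hk] at h
    exact h
  -- conditional expectation of each product
  have hYφ_int : ∀ k ∈ Finset.Icc 1 n, Integrable (fun ω => W.Y k ω * φ k ω) P := by
    intro k hk
    refine (integrable_const (1:ℝ)).mono'
      (((W.measY k).mul
        ((measurable_const (a := (1:ℝ))).indicator (hmeas_amb k))).aestronglyMeasurable) ?_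
    filter_upwards [W.ae_Y_le_one k (Finset.mem_Icc.1 hk).1] with ω hω
    rw [Real.norm_eq_abs, abs_mul]
    have h1 : |W.Y k ω| ≤ 1 := by
      rw [abs_of_nonneg (W.Y_nonneg k ω)]; exact hω
    calc |W.Y k ω| * |φ k ω| ≤ 1 * 1 :=
          mul_le_mul h1 (hφ_le k ω) (abs_nonneg _) zero_le_one
      _ = 1 := by norm_num
  have h_k : ∀ k ∈ Finset.Icc 1 n,
      P[fun ω => W.Y k ω * φ k ω | W.G n] =ᵐ[P] fun ω => W.Y k ω * ((1 - r) / n) := by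
    intro k hk
    have hmul := condExp_mul_of_stronglyMeasurable_left (μ := P) (W.stronglyMeasurableY_G hk)
      (hYφ_int k hk) (hφ_int k)
    refine hmul.trans ?_
    filter_upwards [hcond_φ k hk] with ω hω
    show W.Y k ω * (P[φ k|W.G n]) ω = _
    rw [hω]
  -- representation of Y (n+1)
  have hrepr : W.Y (n+1) =ᵐ[P] fun ω => ∑ k ∈ Finset.Icc 1 n, W.Y k ω * φ k ω := by
    filter_upwards [W.ae_good] with ω hω
    rw [W.step_eq n hn (hω.2 n hn).1]
    by_cases h0 : W.A (n+1) ω = 0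
    · rw [if_pos h0]
      symm
      refine Finset.sum_eq_zero fun k hk => ?_
      have hnot : ω ∉ s1 ∩ sk k := fun hc => hc.1 h0
      simp [hφdef, Set.indicator_of_notMem hnot]
    · rw [if_neg h0]
      have hk0 : W.β n ω ∈ Finset.Icc 1 n := (hω.2 n hn).2
      rw [Finset.sum_eq_single (W.β n ω)]
      · have hmem : ω ∈ s1 ∩ sk (W.β n ω) := ⟨h0, rfl⟩
        simp [hφdef, Set.indicator_of_mem hmem]
      · intro k hk hkne
        have hnot : ω ∉ s1 ∩ sk k := fun hc => hkne (hc.2.symm ▸ rfl)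
        simp [hφdef, Set.indicator_of_notMem hnot]
      · intro hc
        exact absurd hk0 hc
  -- put it together
  have hsum_fun : (fun ω => ∑ k ∈ Finset.Icc 1 n, W.Y k ω * φ k ω)
      = ∑ k ∈ Finset.Icc 1 n, fun ω => W.Y k ω * φ k ω := by
    funext ω; rw [Finset.sum_apply]
  calc P[W.Y (n+1) | W.G n]
      =ᵐ[P] P[fun ω => ∑ k ∈ Finset.Icc 1 n, W.Y k ω * φ k ω | W.G n] :=
        condExp_congr_ae hrepr
    _ =ᵐ[P] ∑ k ∈ Finset.Icc 1 n, P[fun ω => W.Y k ω * φ k ω | W.G n] := by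
        rw [hsum_fun]
        exact condExp_finsetSum hYφ_int _
    _ =ᵐ[P] fun ω => ((1 - r) / n) * W.Zstar n ω := by
        have hball : ∀ᵐ ω ∂P, ∀ k, k ∈ Finset.Icc 1 n →
            (P[fun ω' => W.Y k ω' * φ k ω' | W.G n]) ω = W.Y k ω * ((1 - r) / n) := by
          rw [ae_all_iff]
          intro k
          by_cases hk : k ∈ Finset.Icc 1 n
          · filter_upwards [h_k k hk] with ω hω _ using hω
          · exact Filter.Eventually.of_forall fun ω hc => absurd hc hk
        filter_upwards [hball] with ω hω
        rw [Finset.sum_apply]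
        rw [Finset.sum_congr rfl fun k hk => hω k hk, ← Finset.sum_mul,
          ← Zstar_eq_sum_Y, mul_comm]

lemma condexp_Zstar_succ (n : ℕ) (hn : 1 ≤ n) :
    P[W.Zstar (n+1) | W.G n] =ᵐ[P] fun ω => (1 + (1 - r) / n) * W.Zstar n ω := by
  have hsplit : W.Zstar (n+1) = fun ω => W.Zstar n ω + W.Y (n+1) ω := by
    funext ω
    rw [Zstar_eq_sum_Y, Zstar_eq_sum_Y, Finset.sum_Icc_succ_top (by omega : 1 ≤ n+1)]
  rw [hsplit]
  have hadd := condExp_add (μ := P) (m := W.G n) (W.integrableZstar n)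
    (W.integrableY (n+1) (by omega))
  refine hadd.trans ?_
  have h1 : P[W.Zstar n | W.G n] = W.Zstar n :=
    condExp_of_stronglyMeasurable (W.G_le n) (W.stronglyMeasurableZstar_G n)
      (W.integrableZstar n)
  filter_upwards [W.condexp_Y_succ n hn] with ω hω2
  show (P[W.Zstar n|W.G n]) ω + (P[W.Y (n+1)|W.G n]) ω = _
  rw [h1, hω2]
  ring

lemma aseq_pos (hr1 : r ≤ 1) (n : ℕ) : 0 < aseq r n := by
  rw [aseq]
  refine Finset.prod_pos fun k hk => ?_
  have hk1 : 1 ≤ k := (Finset.mem_Icc.1 hk).1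
  have hk0 : (0:ℝ) < k := by exact_mod_cast hk1
  have : 0 ≤ (1 - r) / k := div_nonneg (by linarith) hk0.le
  linarith

lemma aseq_one : aseq r 1 = 1 := by
  rw [aseq]
  simp

lemma aseq_succ_succ (n : ℕ) : aseq r (n + 2) = aseq r (n + 1) * (1 + (1 - r) / (n + 1)) := by
  rw [aseq, aseq]
  have h1 : n + 2 - 1 = (n + 1 - 1) + 1 := by omega
  rw [h1, Finset.prod_Icc_succ_top (by omega : 1 ≤ n + 1 - 1 + 1)]
  have h2 : n + 1 - 1 + 1 = n + 1 := by omega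
  rw [h2]
  norm_num

/-- the filtration `n ↦ G (n+1)` -/
def MF (W : MERWStops P d p q r) : Filtration ℕ (inferInstance : MeasurableSpace Ω) where
  seq n := W.G (n + 1)
  mono' := fun i j h => W.G_mono (by omega)
  le' n := W.G_le (n + 1)

/-- the shifted normalized process -/
def M (W : MERWStops P d p q r) (n : ℕ) (ω : Ω) : ℝ :=
  (aseq r (n + 1))⁻¹ * W.Zstar (n + 1) ω

lemma integrableM (n : ℕ) : Integrable (W.M n) P :=
  (W.integrableZstar (n+1)).const_mul _

lemma martingaleM : Martingale W.M W.MF P := by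
  refine martingale_nat (fun n => ?_) (fun n => W.integrableM n) (fun n => ?_)
  · exact ((W.stronglyMeasurableZstar_G (n+1)).const_mul _)
  · -- M n =ᵐ P[M (n+1)|G (n+1)]
    have hsmul : W.M (n+1) = (aseq r (n+2))⁻¹ • W.Zstar (n+2) := by
      funext ω
      rw [M]
      rfl
    have h1 : P[W.M (n+1) | W.G (n+1)]
        =ᵐ[P] (aseq r (n+2))⁻¹ • P[W.Zstar (n+2) | W.G (n+1)] := by
      rw [hsmul]
      exact condExp_smul _ _ _
    have h2 := W.condexp_Zstar_succ (n+1) (by omega)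
    symm
    show P[W.M (n+1)|W.G (n+1)] =ᵐ[P] W.M n
    refine h1.trans ?_
    filter_upwards [h2] with ω hω
    show (aseq r (n+2))⁻¹ * (P[W.Zstar (n+2)|W.G (n+1)]) ω = _
    rw [hω, M, aseq_succ_succ, mul_inv]
    push_cast
    have hpos2 : (0:ℝ) < 1 + (1 - r) / ((n:ℝ) + 1) := by
      have h0 : (0:ℝ) < (n:ℝ) + 1 := by positivity
      have : 0 ≤ (1 - r) / ((n:ℝ) + 1) := div_nonneg (by linarith [W.hr.2]) h0.le
      linarith
    rw [mul_assoc, ← mul_assoc (1 + (1 - r) / ((n:ℝ) + 1))⁻¹, inv_mul_cancel₀ hpos2.ne',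
      one_mul]

lemma integralM_le_one (n : ℕ) : ∫ ω, W.M n ω ∂P ≤ 1 := by
  have hconst : ∀ k, ∫ ω, W.M (k+1) ω ∂P = ∫ ω, W.M k ω ∂P := by
    intro k
    have h := W.martingaleM.2 k (k+1) (by omega)
    calc ∫ ω, W.M (k+1) ω ∂P = ∫ ω, (P[W.M (k+1)|W.MF k]) ω ∂P :=
          (integral_condExp (W.MF.le k)).symm
      _ = ∫ ω, W.M k ω ∂P := integral_congr_ae h
  have hind : ∫ ω, W.M n ω ∂P = ∫ ω, W.M 0 ω ∂P := by
    induction n with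
    | zero => rfl
    | succ k ih => rw [hconst k, ih]
  rw [hind]
  have hM0 : W.M 0 = W.Y 1 := by
    funext ω
    rw [M, aseq_one, Zstar_eq_sum_Y]
    simp
  rw [hM0]
  calc ∫ ω, W.Y 1 ω ∂P ≤ ∫ _, (1:ℝ) ∂P :=
        integral_mono_ae (W.integrableY 1 le_rfl) (integrable_const 1) (W.ae_Y_le_one 1 le_rfl)
    _ = 1 := by simp

lemma M_nonneg (n : ℕ) (ω : Ω) : 0 ≤ W.M n ω := by
  rw [M]
  have h1 : 0 ≤ (aseq r (n+1))⁻¹ := (inv_nonneg).2 (aseq_pos W.hr.2 (n+1)).le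
  have h2 : 0 ≤ W.Zstar (n+1) ω := by
    rw [Zstar_eq_sum_Y]
    exact Finset.sum_nonneg fun k _ => W.Y_nonneg k ω
  positivity

lemma eLpNormM_le_one (n : ℕ) : eLpNorm (W.M n) 1 P ≤ 1 := by
  rw [eLpNorm_one_eq_lintegral_enorm, ← ofReal_integral_norm_eq_lintegral_enorm
    (W.integrableM n)]
  have : ∫ ω, ‖W.M n ω‖ ∂P = ∫ ω, W.M n ω ∂P :=
    integral_congr_ae (Filter.Eventually.of_forall fun ω =>
      Real.norm_of_nonneg (W.M_nonneg n ω))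
  rw [this]
  exact ENNReal.ofReal_le_one.2 (W.integralM_le_one n)

lemma M_converges : ∀ᵐ ω ∂P, ∃ L : ℝ, Tendsto (fun n => W.M n ω) atTop (𝓝 L) := by
  filter_upwards [W.martingaleM.submartingale.ae_tendsto_limitProcess
    (R := 1) (fun n => W.eLpNormM_le_one n)] with ω hω
  exact ⟨_, hω⟩

end MERWStops

lemma aseq_half_pos (n : ℕ) : 0 < MERWStops.aseq (1/2 : ℝ) n := by
  rw [MERWStops.aseq]
  refine Finset.prod_pos fun k hk => ?_
  have hk1 : 1 ≤ k := (Finset.mem_Icc.1 hk).1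
  have hk0 : (0:ℝ) < k := by exact_mod_cast hk1
  have : 0 ≤ (1 - 1/2 : ℝ) / k := by positivity
  linarith

lemma aseq_half_le (n : ℕ) (hn : 1 ≤ n) :
    MERWStops.aseq (1/2 : ℝ) n ≤ Real.exp (1/2) * Real.sqrt n := by
  have hpos : ∀ k ∈ Finset.Icc 1 (n-1), (0:ℝ) < 1 + (1 - 1/2) / (k:ℝ) := by
    intro k hk
    have h1 : 1 ≤ k := (Finset.mem_Icc.1 hk).1
    have h0 : (0:ℝ) < k := by exact_mod_cast h1
    have : 0 ≤ (1 - 1/2 : ℝ) / k := by positivity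
    linarith
  have hprodpos : 0 < MERWStops.aseq (1/2:ℝ) n := aseq_half_pos n
  have hn0 : (0:ℝ) < n := by exact_mod_cast hn
  have hlog : Real.log (MERWStops.aseq (1/2:ℝ) n)
      = ∑ k ∈ Finset.Icc 1 (n-1), Real.log (1 + (1 - 1/2) / (k:ℝ)) := by
    rw [MERWStops.aseq]
    exact Real.log_prod fun k hk => (hpos k hk).ne'
  have hstep : ∀ k ∈ Finset.Icc 1 (n-1),
      Real.log (1 + (1 - 1/2) / (k:ℝ)) ≤ (1/2) * ((k:ℝ))⁻¹ := by
    intro k hk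
    have h1 : 1 ≤ k := (Finset.mem_Icc.1 hk).1
    have h0 : (0:ℝ) < k := by exact_mod_cast h1
    have hle := Real.log_le_sub_one_of_pos (hpos k hk)
    have : (1 + (1 - 1/2) / (k:ℝ)) - 1 = (1/2) * ((k:ℝ))⁻¹ := by
      field_simp
      norm_num
    linarith [hle, this.symm.le, this.le]
  have hsum : ∑ k ∈ Finset.Icc 1 (n-1), Real.log (1 + (1 - 1/2) / (k:ℝ))
      ≤ (1/2) * ∑ k ∈ Finset.Icc 1 (n-1), ((k:ℝ))⁻¹ := by
    rw [Finset.mul_sum]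
    exact Finset.sum_le_sum hstep
  have hharm : ∑ k ∈ Finset.Icc 1 (n-1), ((k:ℝ))⁻¹ = ((harmonic (n-1) : ℚ) : ℝ) := by
    rw [harmonic_eq_sum_Icc]
    push_cast
    rfl
  have hharm_le : ((harmonic (n-1) : ℚ) : ℝ) ≤ 1 + Real.log n := by
    refine (harmonic_le_one_add_log (n-1)).trans ?_
    have : Real.log (n-1 : ℕ) ≤ Real.log n := by
      rcases Nat.eq_zero_or_pos (n-1) with h | h
      · rw [h]
        simp only [Nat.cast_zero, Real.log_zero]
        exact Real.log_nonneg (by exact_mod_cast hn)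
      · refine Real.log_le_log (by exact_mod_cast h) ?_
        exact_mod_cast Nat.sub_le n 1
    linarith
  have hfinal : Real.log (MERWStops.aseq (1/2:ℝ) n) ≤ (1 + Real.log n) / 2 := by
    rw [hlog]
    calc ∑ k ∈ Finset.Icc 1 (n-1), Real.log (1 + (1 - 1/2) / (k:ℝ))
        ≤ (1/2) * ∑ k ∈ Finset.Icc 1 (n-1), ((k:ℝ))⁻¹ := hsum
      _ = (1/2) * ((harmonic (n-1) : ℚ) : ℝ) := by rw [hharm]
      _ ≤ (1 + Real.log n) / 2 := by linarith
  calc MERWStops.aseq (1/2:ℝ) n = Real.exp (Real.log (MERWStops.aseq (1/2:ℝ) n)) :=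
        (Real.exp_log hprodpos).symm
    _ ≤ Real.exp ((1 + Real.log n) / 2) := Real.exp_le_exp.2 hfinal
    _ = Real.exp (1/2) * Real.sqrt n := by
        rw [show (1 + Real.log n)/2 = 1/2 + (Real.log n)/2 by ring, Real.exp_add]
        congr 1
        rw [Real.exp_half, Real.exp_log hn0]

lemma tendsto_aseq_ratio :
    Tendsto (fun n : ℕ => MERWStops.aseq (1/2 : ℝ) n / (Real.sqrt n * Real.log n))
      atTop (𝓝 0) := by
  have h1 : Tendsto (fun n : ℕ => Real.exp (1/2) / Real.log n) atTop (𝓝 0) :=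
    Tendsto.div_atTop tendsto_const_nhds
      (Real.tendsto_log_atTop.comp tendsto_natCast_atTop_atTop)
  refine tendsto_of_tendsto_of_tendsto_of_le_of_le' tendsto_const_nhds h1 ?_ ?_
  · filter_upwards [eventually_ge_atTop 1] with n hn
    have hs : (0:ℝ) ≤ Real.sqrt n := Real.sqrt_nonneg _
    have hl : (0:ℝ) ≤ Real.log n := Real.log_nonneg (by exact_mod_cast hn)
    exact div_nonneg (aseq_half_pos n).le (mul_nonneg hs hl)
  · filter_upwards [eventually_ge_atTop 2] with n hn
    have hs : (0:ℝ) < Real.sqrt n := Real.sqrt_pos.2 (by positivity)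
    have hl : (0:ℝ) < Real.log n := Real.log_pos (by exact_mod_cast Nat.lt_of_lt_of_le one_lt_two hn)
    calc MERWStops.aseq (1/2:ℝ) n / (Real.sqrt n * Real.log n)
        ≤ (Real.exp (1/2) * Real.sqrt n) / (Real.sqrt n * Real.log n) :=
          (div_le_div_iff_of_pos_right (mul_pos hs hl)).2 (aseq_half_le n (by omega))
      _ = Real.exp (1/2) / Real.log n := by
          rw [show Real.exp (1/2) * Real.sqrt n = Real.sqrt n * Real.exp (1/2) from mul_comm _ _,
            mul_div_mul_left _ _ hs.ne']

/-- In the MERW with stops, if `r = 1/2`, then `Z_n*/(√n log n) → 0` a.s. -/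
theorem merwStops_lln_of_r_eq_half
    {Ω : Type*} [MeasurableSpace Ω] {P : Measure Ω} [IsProbabilityMeasure P]
    {d : ℕ} {p q r : ℝ} (W : MERWStops P d p q r) (hr : r = 1 / 2) :
    ∀ᵐ ω ∂P, Tendsto (fun n : ℕ => W.Zstar n ω / (Real.sqrt n * Real.log n))
      atTop (nhds 0) := by
  subst hr
  filter_upwards [W.M_converges] with ω hω
  obtain ⟨L, hL⟩ := hω
  rw [← tendsto_add_atTop_iff_nat 1]
  have heq : ∀ k : ℕ, W.Zstar (k+1) ω / (Real.sqrt ((k+1 : ℕ) : ℝ) * Real.log ((k+1 : ℕ) : ℝ))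
      = W.M k ω * (MERWStops.aseq (1/2 : ℝ) (k+1)
          / (Real.sqrt ((k+1 : ℕ) : ℝ) * Real.log ((k+1 : ℕ) : ℝ))) := by
    intro k
    rw [MERWStops.M]
    have ha : MERWStops.aseq (1/2 : ℝ) (k+1) ≠ 0 := (aseq_half_pos (k+1)).ne'
    simp only [div_eq_mul_inv]
    calc W.Zstar (k+1) ω * (Real.sqrt ((k+1:ℕ):ℝ) * Real.log ((k+1:ℕ):ℝ))⁻¹
        = ((MERWStops.aseq (1/2:ℝ) (k+1))⁻¹ * MERWStops.aseq (1/2:ℝ) (k+1))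
          * (W.Zstar (k+1) ω * (Real.sqrt ((k+1:ℕ):ℝ) * Real.log ((k+1:ℕ):ℝ))⁻¹) := by
          rw [inv_mul_cancel₀ ha, one_mul]
      _ = (MERWStops.aseq (1/2:ℝ) (k+1))⁻¹ * W.Zstar (k+1) ω
          * (MERWStops.aseq (1/2:ℝ) (k+1)
            * (Real.sqrt ((k+1:ℕ):ℝ) * Real.log ((k+1:ℕ):ℝ))⁻¹) := by ring
  have hratio : Tendsto (fun k : ℕ => MERWStops.aseq (1/2 : ℝ) (k+1)
      / (Real.sqrt ((k+1 : ℕ) : ℝ) * Real.log ((k+1 : ℕ) : ℝ))) atTop (𝓝 0) :=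
    tendsto_aseq_ratio.comp (tendsto_add_atTop_nat 1)
  have hcomp := hL.mul hratio
  rw [mul_zero] at hcomp
  exact Tendsto.congr (fun k => (heq k).symm) hcomp
end
end

section
/- In the multidimensional elephant random walk with stops, for every n ≥ 1 one has E(‖X_{n+1}‖² | G_n) = ((1−r)/n)·Z_n* almost surely, and consequently E(Z_{n+1}* | G_n) = (1 + (1−r)/n)·Z_n* almost surely and E(Z_n*) = Γ(n+1−r)/(Γ(2−r)·Γ(n)) for all n ≥ 1, where Γ denotes the Gamma function. -/
open MeasureTheory ProbabilityTheory Filter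

noncomputable section

instance {dm dn : ℕ} : MeasurableSingletonClass (Matrix (Fin dm) (Fin dn) ℝ) :=
  inferInstanceAs (MeasurableSingletonClass (Fin dm → Fin dn → ℝ))

namespace MERWAux


lemma fin2_eq_of_ne_zero : ∀ {a b : Fin 2}, a ≠ 0 → b ≠ 0 → a = b := by decide

lemma cyclicMatrix_pow_apply {d : ℕ} (i : ℕ) (a : Fin d) : ∀ b : Fin d,
    (cyclicMatrix d ^ i) a b = if (b : ℕ) = ((a : ℕ) + i) % d then 1 else 0 := by
  induction i with
  | zero =>
    intro b
    simp only [pow_zero, Matrix.one_apply, Nat.add_zero, Nat.mod_eq_of_lt a.isLt]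
    by_cases h : a = b
    · simp [h]
    · rw [if_neg h, if_neg]
      intro hb; exact h (Fin.ext hb.symm)
  | succ i ih =>
    intro b
    have hd : 0 < d := a.pos
    rw [pow_succ, Matrix.mul_apply]
    have hc : ∀ c : Fin d, (cyclicMatrix d ^ i) a c * cyclicMatrix d c b
        = if c = (⟨((a : ℕ) + i) % d, Nat.mod_lt _ hd⟩ : Fin d) then cyclicMatrix d c b else 0 := by
      intro c
      rw [ih c]
      by_cases h : c = (⟨((a : ℕ) + i) % d, Nat.mod_lt _ hd⟩ : Fin d)
      · rw [if_pos h, if_pos, one_mul]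
        rw [h]
      · rw [if_neg h, if_neg, zero_mul]
        intro hb; exact h (Fin.ext hb)
    simp only [hc]
    rw [Finset.sum_ite_eq' Finset.univ _ (fun c => cyclicMatrix d c b)]
    simp only [Finset.mem_univ, if_true]
    show (if (b : ℕ) = (((a : ℕ) + i) % d + 1) % d then (1:ℝ) else 0) = _
    rw [Nat.mod_add_mod, Nat.add_assoc]

/-- The family of move matrices `± J^i`. -/
def moveMat (d : ℕ) (si : Fin 2 × Fin d) : Matrix (Fin d) (Fin d) ℝ :=
  (if si.1 = 0 then (1 : ℝ) else -1) • cyclicMatrix d ^ (si.2 : ℕ)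

lemma moveMat_apply {d : ℕ} (si : Fin 2 × Fin d) (a b : Fin d) :
    moveMat d si a b =
      if (b : ℕ) = ((a : ℕ) + (si.2 : ℕ)) % d then (if si.1 = 0 then (1:ℝ) else -1) else 0 := by
  simp only [moveMat, Matrix.smul_apply, cyclicMatrix_pow_apply, smul_eq_mul, mul_ite, mul_one,
    mul_zero]

lemma moveMat_apply_zero {d : ℕ} (hd : 0 < d) (si : Fin 2 × Fin d) (v : Fin d) :
    moveMat d si ⟨0, hd⟩ v = if v = si.2 then (if si.1 = 0 then (1:ℝ) else -1) else 0 := by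
  rw [moveMat_apply]
  congr 1
  simp [Fin.ext_iff, Nat.mod_eq_of_lt si.2.isLt]

lemma moveMat_injective {d : ℕ} (hd : 0 < d) : Function.Injective (moveMat d) := by
  intro si si' h
  have h1 := congrFun (congrFun h ⟨0, hd⟩) si.2
  rw [moveMat_apply_zero hd, moveMat_apply_zero hd, if_pos rfl] at h1
  split_ifs at h1 <;>
    first
      | (refine Prod.ext ?_ (by assumption)
         first
           | exact fin2_eq_of_ne_zero (by assumption) (by assumption)
           | exact ((by assumption : si.1 = 0).trans (by assumption : si'.1 = 0).symm)
           | norm_num at h1)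
      | norm_num at h1

lemma moveMat_ne_zero {d : ℕ} (hd : 0 < d) (si : Fin 2 × Fin d) : moveMat d si ≠ 0 := by
  intro h
  have h1 := congrFun (congrFun h ⟨0, hd⟩) si.2
  rw [moveMat_apply_zero hd, if_pos rfl] at h1
  split_ifs at h1 <;> norm_num at h1

lemma moveMat_sum_sq {d : ℕ} [NeZero d] (si : Fin 2 × Fin d) (x : Fin d → ℝ) :
    ∑ a : Fin d, (∑ j : Fin d, moveMat d si a j * x j) ^ 2 = ∑ j : Fin d, x j ^ 2 := by
  set σ : ℝ := if si.1 = 0 then (1:ℝ) else -1 with hσ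
  have hinner : ∀ a : Fin d, (∑ j : Fin d, moveMat d si a j * x j) = σ * x (a + si.2) := by
    intro a
    have hterm : ∀ j : Fin d, moveMat d si a j * x j
        = if j = a + si.2 then σ * x j else 0 := by
      intro j
      have hcond : ((j:ℕ) = ((a:ℕ) + (si.2:ℕ)) % d) = (j = a + si.2) := by
        simp [Fin.ext_iff, Fin.val_add]
      simp only [moveMat_apply, hcond, ite_mul, zero_mul, ← hσ]
    simp only [hterm]
    rw [Finset.sum_ite_eq' Finset.univ (a + si.2) (fun j => σ * x j)]
    simp
  simp only [hinner, mul_pow]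
  have hsq : σ ^ 2 = 1 := by
    rw [hσ]; split_ifs <;> norm_num
  simp only [hsq, one_mul]
  exact Fintype.sum_equiv (Equiv.addRight si.2) _ _ (fun a => rfl)

lemma moveMat_one {d : ℕ} [NeZero d] : moveMat d (0, 0) = 1 := by
  simp [moveMat]

lemma moveMat_neg_one {d : ℕ} [NeZero d] : moveMat d (1, 0) = -1 := by
  simp [moveMat]



variable {Ω : Type*} [m0 : MeasurableSpace Ω] {P : Measure Ω} [IsProbabilityMeasure P]

lemma ae_exists_of_sum_eq_one {ι : Type*} [Fintype ι] {E : ι → Set Ω}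
    (hmeas : ∀ i, MeasurableSet (E i)) (hdisj : Pairwise (Function.onFun Disjoint E))
    (hsum : ∑ i, P (E i) = 1) : ∀ᵐ ω ∂P, ∃ i, ω ∈ E i := by
  have h1 : P (⋃ i, E i) = 1 := by
    rw [measure_iUnion hdisj hmeas, tsum_fintype]; exact hsum
  have h2 : P (⋃ i, E i)ᶜ = 0 := by
    rw [measure_compl (MeasurableSet.iUnion hmeas) (measure_ne_top _ _), h1, measure_univ,
      tsub_self]
  rw [ae_iff]
  convert h2 using 2
  ext ω
  simp

lemma condexp_mul_indicator {Ω : Type*} {m m' m0 : MeasurableSpace Ω} {P : Measure Ω}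
    [IsProbabilityMeasure P] (hm : m ≤ m0) (hm' : m' ≤ m0)
    (hind : Indep m' m P) {S : Set Ω} (hS : MeasurableSet[m'] S) {f : Ω → ℝ}
    (hf : StronglyMeasurable[m] f)
    (hfS : Integrable (fun ω => f ω * S.indicator (fun _ => (1:ℝ)) ω) P) :
    P[(fun ω => f ω * S.indicator (fun _ => (1:ℝ)) ω) | m]
      =ᵐ[P] fun ω => (P S).toReal * f ω := by
  have hS0 : MeasurableSet[m0] S := hm' _ hS
  have hgi : Integrable (S.indicator (fun _ => (1:ℝ))) P :=
    (integrable_const (1:ℝ)).indicator hS0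
  have h1 : P[f * S.indicator (fun _ => (1:ℝ)) | m]
      =ᵐ[P] f * P[S.indicator (fun _ => (1:ℝ)) | m] :=
    condExp_mul_of_stronglyMeasurable_left hf hfS hgi
  have hSm' : StronglyMeasurable[m'] (S.indicator (fun _ => (1:ℝ))) :=
    stronglyMeasurable_const.indicator hS
  have h2 : P[S.indicator (fun _ => (1:ℝ)) | m]
      =ᵐ[P] fun _ => ∫ ω, S.indicator (fun _ => (1:ℝ)) ω ∂P :=
    condExp_indep_eq hm' hm hSm' hind
  have h3 : ∫ ω, S.indicator (fun _ => (1:ℝ)) ω ∂P = (P S).toReal := by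
    rw [integral_indicator_const (1:ℝ) hS0]
    simp [Measure.real]
  filter_upwards [h1, h2] with ω hω1 hω2
  show (P[(fun ω => f ω * S.indicator (fun _ => (1:ℝ)) ω) | m]) ω = _
  calc (P[(fun ω => f ω * S.indicator (fun _ => (1:ℝ)) ω) | m]) ω
      = (f * P[S.indicator (fun _ => (1:ℝ)) | m]) ω := hω1
    _ = f ω * (P S).toReal := by
        rw [Pi.mul_apply, hω2, h3]
    _ = (P S).toReal * f ω := mul_comm _ _


lemma norm_sq_eq {d : ℕ} (x : EuclideanSpace ℝ (Fin d)) : ‖x‖ ^ 2 = ∑ i, x i ^ 2 := by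
  rw [EuclideanSpace.norm_eq, Real.sq_sqrt (by positivity)]
  simp [sq_abs]

end MERWAux

namespace MERWAux

/-- probability weight of each move matrix -/
def cprob (p q : ℝ) {d : ℕ} (hd : 0 < d) (si : Fin 2 × Fin d) : ℝ :=
  if si = (0, ⟨0, hd⟩) then p else q

lemma cprob_nonneg {p q : ℝ} (hp : 0 ≤ p) (hq : 0 ≤ q) {d : ℕ} (hd : 0 < d)
    (si : Fin 2 × Fin d) : 0 ≤ cprob p q hd si := by
  unfold cprob; split_ifs <;> assumption

lemma cprob_sum (p q : ℝ) {d : ℕ} (hd : 0 < d) :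
    ∑ si : Fin 2 × Fin d, cprob p q hd si = p + (2 * (d : ℝ) - 1) * q := by
  have h : ∀ si : Fin 2 × Fin d, cprob p q hd si
      = q + (if si = (0, ⟨0, hd⟩) then p - q else 0) := by
    intro si; unfold cprob; split_ifs <;> ring
  simp only [h]
  rw [Finset.sum_add_distrib, Finset.sum_const,
    Finset.sum_ite_eq' Finset.univ ((0 : Fin 2), (⟨0, hd⟩ : Fin d)) (fun _ => p - q)]
  simp only [Finset.mem_univ, if_true, Finset.card_univ, Fintype.card_prod, Fintype.card_fin]
  have hcast : ((2 * d : ℕ) : ℝ) = 2 * (d : ℝ) := by push_cast; ring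
  rw [nsmul_eq_mul, hcast]
  ring

/-- the vectors `± e_i` -/
def vvec (d : ℕ) (si : Fin 2 × Fin d) : EuclideanSpace ℝ (Fin d) :=
  (if si.1 = 0 then (1 : ℝ) else -1) • EuclideanSpace.single si.2 1

lemma vvec_apply {d : ℕ} (si : Fin 2 × Fin d) (j : Fin d) :
    vvec d si j = if j = si.2 then (if si.1 = 0 then (1:ℝ) else -1) else 0 := by
  unfold vvec
  rw [PiLp.smul_apply, EuclideanSpace.single_apply, smul_eq_mul]
  split_ifs <;> ring

lemma vvec_injective {d : ℕ} : Function.Injective (vvec d) := by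
  intro si si' h
  have h1 : vvec d si si.2 = vvec d si' si.2 := by rw [h]
  rw [vvec_apply, vvec_apply, if_pos rfl] at h1
  split_ifs at h1 <;>
    first
      | (refine Prod.ext ?_ (by assumption)
         first
           | exact fin2_eq_of_ne_zero (by assumption) (by assumption)
           | exact ((by assumption : si.1 = 0).trans (by assumption : si'.1 = 0).symm)
           | norm_num at h1)
      | norm_num at h1

lemma vvec_norm {d : ℕ} (si : Fin 2 × Fin d) : ‖vvec d si‖ = 1 := by
  unfold vvec
  rw [norm_smul, EuclideanSpace.norm_single]
  split_ifs <;> simp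

end MERWAux

namespace MERWStops

open MERWAux

variable {Ω : Type*} [MeasurableSpace Ω] {P : Measure Ω} {d : ℕ} {p q r : ℝ}

lemma hd0 (W : MERWStops P d p q r) : 0 < d := W.hd

lemma hGle (W : MERWStops P d p q r) (n : ℕ) : W.G n ≤ ‹MeasurableSpace Ω› :=
  iSup₂_le fun k _ => (W.measX k).comap_le

lemma measXG (W : MERWStops P d p q r) {n k : ℕ} (hk : k ∈ Finset.Icc 1 n) :
    Measurable[W.G n] (W.X k) := by
  rw [measurable_iff_comap_le]
  exact le_iSup₂ (f := fun k (_ : k ∈ Finset.Icc 1 n) =>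
    MeasurableSpace.comap (W.X k) inferInstance) k hk

lemma smsq (W : MERWStops P d p q r) {n k : ℕ} (hk : k ∈ Finset.Icc 1 n) :
    StronglyMeasurable[W.G n] (fun ω => ‖W.X k ω‖ ^ 2) := by
  have h := ((W.measXG hk).stronglyMeasurable).norm
  simpa [pow_two, Pi.mul_def] using h.mul h

/-- probability that `A (n+1)` equals a given move matrix -/
lemma probA (W : MERWStops P d p q r) (n : ℕ) (hn : 1 ≤ n) (si : Fin 2 × Fin d) :
    P {ω | W.A (n + 1) ω = moveMat d si} = ENNReal.ofReal (cprob p q W.hd0 si) := by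
  haveI : NeZero d := ⟨by have := W.hd; omega⟩
  have h00 : (⟨0, W.hd0⟩ : Fin d) = 0 := by ext; simp
  have hc : ∀ si : Fin 2 × Fin d, cprob p q W.hd0 si = if si = (0, 0) then p else q := by
    intro si; unfold cprob; rw [h00]
  rcases si with ⟨s, i⟩
  rw [hc]
  by_cases hi : i = 0
  · subst hi
    by_cases hs : s = 0
    · subst hs
      rw [moveMat_one, if_pos rfl]
      exact W.hAI n hn
    · have hs1 : s = 1 := fin2_eq_of_ne_zero hs one_ne_zero
      subst hs1
      rw [moveMat_neg_one, if_neg (by simp)]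
      exact W.hAnegI n hn
  · have hiv : (i : ℕ) ≠ 0 := by
      intro h; exact hi (Fin.ext (by simpa using h))
    have h1 : (i : ℕ) ∈ Finset.Icc 1 (d - 1) := by
      rw [Finset.mem_Icc]
      have := i.isLt
      omega
    rw [if_neg (fun h => hi (congrArg Prod.snd h))]
    by_cases hs : s = 0
    · subst hs
      rw [show moveMat d (0, i) = cyclicMatrix d ^ (i : ℕ) by simp [moveMat]]
      exact W.hAJ n hn (i : ℕ) h1
    · have hs1 : s = 1 := fin2_eq_of_ne_zero hs one_ne_zero
      subst hs1
      rw [show moveMat d (1, i) = -(cyclicMatrix d ^ (i : ℕ)) by simp [moveMat]]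
      exact W.hAnegJ n hn (i : ℕ) h1

lemma ae_A (W : MERWStops P d p q r) [IsProbabilityMeasure P] (n : ℕ) (hn : 1 ≤ n) :
    ∀ᵐ ω ∂P, W.A (n + 1) ω = 0 ∨ ∃ si, W.A (n + 1) ω = moveMat d si := by
  haveI : NeZero d := ⟨by have := W.hd; omega⟩
  set g : Option (Fin 2 × Fin d) → Matrix (Fin d) (Fin d) ℝ :=
    fun e => e.elim 0 (moveMat d) with hg_def
  have hg : Function.Injective g := by
    intro a b hab
    cases a with
    | none => cases b with
      | none => rfl
      | some sb => exact absurd hab.symm (moveMat_ne_zero W.hd0 sb)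
    | some sa => cases b with
      | none => exact absurd hab (moveMat_ne_zero W.hd0 sa)
      | some sb => rw [moveMat_injective W.hd0 hab]
  have key : ∀ᵐ ω ∂P, ∃ e, ω ∈ {ω' | W.A (n + 1) ω' = g e} := by
    apply ae_exists_of_sum_eq_one
    · exact fun e => (W.measA (n + 1)) (measurableSet_singleton (g e))
    · intro a b hab
      rw [Function.onFun, Set.disjoint_left]
      exact fun ω ha hb => hab (hg ((ha : _ = _).symm.trans hb))
    · rw [Fintype.sum_option]
      have h0 : P {ω' | W.A (n + 1) ω' = g none} = ENNReal.ofReal r := W.hAzero n hn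
      have hsi : ∀ si, P {ω' | W.A (n + 1) ω' = g (some si)}
          = ENNReal.ofReal (cprob p q W.hd0 si) := fun si => W.probA n hn si
      simp only [h0, hsi]
      rw [← ENNReal.ofReal_sum_of_nonneg
        (fun si _ => cprob_nonneg W.hp.1 W.hq.1 W.hd0 si), cprob_sum]
      rw [← ENNReal.ofReal_add W.hr.1 (by nlinarith [W.hp.1, W.hq.1, W.hd,
        (by exact_mod_cast W.hd : (1:ℝ) ≤ (d:ℝ))])]
      rw [show r + (p + (2 * (d:ℝ) - 1) * q) = 1 by linarith [W.hpqr]]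
      simp
  filter_upwards [key] with ω hke
  obtain ⟨e, he⟩ := hke
  cases e with
  | none => exact Or.inl he
  | some si => exact Or.inr ⟨si, he⟩

lemma ae_beta (W : MERWStops P d p q r) [IsProbabilityMeasure P] (n : ℕ) (hn : 1 ≤ n) :
    ∀ᵐ ω ∂P, W.β n ω ∈ Finset.Icc 1 n := by
  have key : ∀ᵐ ω ∂P, ∃ k : {x // x ∈ Finset.Icc 1 n}, ω ∈ {ω' | W.β n ω' = (k : ℕ)} := by
    apply ae_exists_of_sum_eq_one
    · exact fun k => (W.measβ n) (measurableSet_singleton (k : ℕ))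
    · intro a b hab
      rw [Function.onFun, Set.disjoint_left]
      exact fun ω ha hb => hab (Subtype.ext ((ha : _ = _).symm.trans hb))
    · rw [Finset.sum_coe_sort (Finset.Icc 1 n) (fun k => P {ω' | W.β n ω' = k})]
      rw [Finset.sum_congr rfl (fun k hk => W.hβ n hn k hk), Finset.sum_const, Nat.card_Icc]
      have hn' : ((n : ℝ)) ≠ 0 := by positivity
      rw [nsmul_eq_mul]
      rw [show ((n + 1 - 1 : ℕ) : ENNReal) = ((n : ℕ) : ENNReal) by norm_num]
      rw [← ENNReal.ofReal_natCast, ← ENNReal.ofReal_mul (by positivity)]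
      rw [mul_one_div_cancel hn']
      simp
  filter_upwards [key] with ω hkk
  obtain ⟨k, hk⟩ := hkk
  rw [(hk : W.β n ω = (k : ℕ))]
  exact k.2

lemma ae_X1 (W : MERWStops P d p q r) [IsProbabilityMeasure P] :
    ∀ᵐ ω ∂P, ‖W.X 1 ω‖ = 1 := by
  have key : ∀ᵐ ω ∂P, ∃ si : Fin 2 × Fin d, ω ∈ {ω' | W.X 1 ω' = vvec d si} := by
    apply ae_exists_of_sum_eq_one
    · exact fun si => (W.measX 1) (measurableSet_singleton (vvec d si))
    · intro a b hab
      rw [Function.onFun, Set.disjoint_left]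
      exact fun ω ha hb => hab (vvec_injective ((ha : _ = _).symm.trans hb))
    · have hsi : ∀ si : Fin 2 × Fin d,
          P {ω' | W.X 1 ω' = vvec d si} = ENNReal.ofReal (1 / (2 * (d : ℝ))) := by
        intro si
        by_cases hs : si.1 = 0
        · have : vvec d si = EuclideanSpace.single si.2 1 := by
            unfold vvec; rw [if_pos hs, one_smul]
          rw [this]
          exact (W.hX1 si.2).1
        · have : vvec d si = -EuclideanSpace.single si.2 1 := by
            unfold vvec; rw [if_neg hs, neg_one_smul]
          rw [this]
          exact (W.hX1 si.2).2
      simp only [hsi]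
      rw [Finset.sum_const, Finset.card_univ, Fintype.card_prod, Fintype.card_fin,
        Fintype.card_fin, nsmul_eq_mul]
      have hd' : (0 : ℝ) < 2 * (d : ℝ) := by
        have : (1:ℝ) ≤ (d:ℝ) := by exact_mod_cast W.hd
        linarith
      rw [show ((2 * d : ℕ) : ENNReal) = ENNReal.ofReal ((2 * d : ℕ) : ℝ) by
        rw [ENNReal.ofReal_natCast]]
      rw [← ENNReal.ofReal_mul (by positivity)]
      rw [show ((2 * d : ℕ) : ℝ) * (1 / (2 * (d:ℝ))) = 1 by
        push_cast; field_simp; exact div_self (ne_of_gt (by linarith))]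
      simp
  filter_upwards [key] with ω hss
  obtain ⟨si, hsi⟩ := hss
  rw [(hsi : W.X 1 ω = vvec d si), vvec_norm]

end MERWStops

namespace MERWStops

open MERWAux

variable {Ω : Type*} [MeasurableSpace Ω] {P : Measure Ω} {d : ℕ} {p q r : ℝ}

lemma norm_bound (W : MERWStops P d p q r) [IsProbabilityMeasure P] :
    ∀ m : ℕ, ∀ᵐ ω ∂P, 1 ≤ m → ‖W.X m ω‖ ≤ 1 := by
  intro m
  induction m using Nat.strong_induction_on with
  | _ m ih =>
    match m with
    | 0 => filter_upwards with ω h; omega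
    | 1 =>
      filter_upwards [W.ae_X1] with ω h _
      exact le_of_eq h
    | (n + 2) =>
      have hn : 1 ≤ n + 1 := by omega
      haveI : NeZero d := ⟨by have := W.hd; omega⟩
      have hall : ∀ᵐ ω ∂P, ∀ k, k ≤ n + 1 → 1 ≤ k → ‖W.X k ω‖ ≤ 1 := by
        rw [ae_all_iff]
        intro k
        by_cases hk : k ≤ n + 1
        · filter_upwards [ih k (by omega)] with ω h _ h1
          exact h h1
        · filter_upwards with ω h; omega
      filter_upwards [W.ae_A (n + 1) hn, W.ae_beta (n + 1) hn, hall] with ω hA hβ hallω _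
      have hcoord : ∀ i, W.X (n + 2) ω i =
          ∑ j, W.A (n + 2) ω i j * W.X (W.β (n + 1) ω) ω j := W.hrec (n + 1) hn ω
      have hsq : ‖W.X (n + 2) ω‖ ^ 2 ≤ 1 := by
        rw [norm_sq_eq]
        rcases hA with hA0 | ⟨si, hsi⟩
        · have hz : ∀ i, W.X (n + 2) ω i = 0 := by
            intro i; rw [hcoord i, hA0]; simp
          simp [hz]
        · have : ∑ i, W.X (n + 2) ω i ^ 2 = ∑ j, W.X (W.β (n + 1) ω) ω j ^ 2 := by
            calc ∑ i, W.X (n + 2) ω i ^ 2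
                = ∑ i, (∑ j, moveMat d si i j * W.X (W.β (n + 1) ω) ω j) ^ 2 := by
                  refine Finset.sum_congr rfl fun i _ => ?_
                  rw [hcoord i, hsi]
              _ = ∑ j, W.X (W.β (n + 1) ω) ω j ^ 2 := moveMat_sum_sq si _
          rw [this, ← norm_sq_eq]
          have hb := hallω (W.β (n + 1) ω) (Finset.mem_Icc.mp hβ).2 (Finset.mem_Icc.mp hβ).1
          exact pow_le_one₀ (norm_nonneg _) hb
      nlinarith [norm_nonneg (W.X (n + 2) ω)]

lemma intX (W : MERWStops P d p q r) [IsProbabilityMeasure P] (k : ℕ) (hk : 1 ≤ k) :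
    Integrable (fun ω => ‖W.X k ω‖ ^ 2) P := by
  refine (integrable_const (1 : ℝ)).mono' ?_ ?_
  · exact ((W.measX k).norm.pow_const 2).aestronglyMeasurable
  · filter_upwards [W.norm_bound k] with ω h
    rw [Real.norm_eq_abs, abs_of_nonneg (by positivity)]
    exact pow_le_one₀ (norm_nonneg _) (h hk)

lemma intZ (W : MERWStops P d p q r) [IsProbabilityMeasure P] (n : ℕ) :
    Integrable (W.Zstar n) P := by
  have : W.Zstar n = fun ω => ∑ k ∈ Finset.Icc 1 n, ‖W.X k ω‖ ^ 2 := rfl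
  rw [this]
  exact integrable_finset_sum _ fun k hk => W.intX k (Finset.mem_Icc.mp hk).1

lemma smZ (W : MERWStops P d p q r) (n : ℕ) : StronglyMeasurable[W.G n] (W.Zstar n) := by
  have : W.Zstar n = fun ω => ∑ k ∈ Finset.Icc 1 n, ‖W.X k ω‖ ^ 2 := rfl
  rw [this]
  exact Finset.stronglyMeasurable_fun_sum _ fun k hk => W.smsq hk

lemma indep_sup (W : MERWStops P d p q r) [IsProbabilityMeasure P] (n : ℕ) (hn : 1 ≤ n) :
    Indep (MeasurableSpace.comap (W.A (n + 1)) inferInstance ⊔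
      MeasurableSpace.comap (W.β n) inferInstance) (W.G n) P := by
  have h := W.hindep n hn
  have h_le : ∀ i : Fin 3,
      (![MeasurableSpace.comap (W.A (n + 1)) inferInstance,
        MeasurableSpace.comap (W.β n) inferInstance,
        ⨆ k ∈ Finset.Icc 1 n, MeasurableSpace.comap (W.X k) inferInstance] i)
        ≤ ‹MeasurableSpace Ω› := by
    intro i
    fin_cases i
    · exact (W.measA (n + 1)).comap_le
    · exact (W.measβ n).comap_le
    · exact W.hGle n
  have hI := indep_biSup_compl h_le h {0, 1}
  have e1 : (⨆ i ∈ ({0, 1} : Set (Fin 3)),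
      (![MeasurableSpace.comap (W.A (n + 1)) inferInstance,
        MeasurableSpace.comap (W.β n) inferInstance,
        ⨆ k ∈ Finset.Icc 1 n, MeasurableSpace.comap (W.X k) inferInstance] i))
      = MeasurableSpace.comap (W.A (n + 1)) inferInstance ⊔
        MeasurableSpace.comap (W.β n) inferInstance := by
    rw [iSup_insert, iSup_singleton]
    rfl
  have e2 : (({0, 1} : Set (Fin 3))ᶜ) = {2} := by
    ext i; fin_cases i <;> simp
  have e3 : (⨆ i ∈ (({0, 1} : Set (Fin 3))ᶜ),
      (![MeasurableSpace.comap (W.A (n + 1)) inferInstance,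
        MeasurableSpace.comap (W.β n) inferInstance,
        ⨆ k ∈ Finset.Icc 1 n, MeasurableSpace.comap (W.X k) inferInstance] i)) = W.G n := by
    rw [e2, iSup_singleton]
    rfl
  rwa [e1, e3] at hI

lemma indep_Aβ (W : MERWStops P d p q r) [IsProbabilityMeasure P] (n : ℕ) (hn : 1 ≤ n) :
    Indep (MeasurableSpace.comap (W.A (n + 1)) inferInstance)
      (MeasurableSpace.comap (W.β n) inferInstance) P :=
  (W.hindep n hn).indep (i := 0) (j := 1) (by decide)

end MERWStops

namespace MERWStops

open MERWAux

variable {Ω : Type*} [MeasurableSpace Ω] {P : Measure Ω} {d : ℕ} {p q r : ℝ}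

lemma partA (W : MERWStops P d p q r) [IsProbabilityMeasure P] (n : ℕ) (hn : 1 ≤ n) :
    P[(fun ω => ‖W.X (n + 1) ω‖ ^ 2) | W.G n]
      =ᵐ[P] fun ω => ((1 - r) / n) * W.Zstar n ω := by
  haveI : NeZero d := ⟨by have := W.hd; omega⟩
  classical
  set S : ℕ × (Fin 2 × Fin d) → Set Ω := fun ksi =>
    {ω | W.β n ω = ksi.1} ∩ {ω | W.A (n + 1) ω = moveMat d ksi.2} with hS_def
  set F : ℕ × (Fin 2 × Fin d) → Ω → ℝ := fun ksi ω =>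
    ‖W.X ksi.1 ω‖ ^ 2 * (S ksi).indicator (fun _ => (1:ℝ)) ω with hF_def
  set s : Finset (ℕ × (Fin 2 × Fin d)) := (Finset.Icc 1 n) ×ˢ Finset.univ with hs_def
  have hn' : (0:ℝ) < (n:ℝ) := by exact_mod_cast hn
  -- a.e. decomposition
  have hdecomp : (fun ω => ‖W.X (n + 1) ω‖ ^ 2) =ᵐ[P] fun ω => ∑ ksi ∈ s, F ksi ω := by
    filter_upwards [W.ae_A n hn, W.ae_beta n hn] with ω hA hβ
    rcases hA with hA0 | ⟨si0, hsi0⟩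
    · have hz : ∀ i, W.X (n + 1) ω i = 0 := fun i => by rw [W.hrec n hn ω i, hA0]; simp
      have h1 : ‖W.X (n + 1) ω‖ ^ 2 = 0 := by rw [norm_sq_eq]; simp [hz]
      rw [h1]
      symm
      apply Finset.sum_eq_zero
      intro ksi _
      have hnot : ω ∉ S ksi := fun hmem =>
        moveMat_ne_zero W.hd0 ksi.2 (by rw [← (hmem.2 : _ = _), hA0])
      simp [hF_def, Set.indicator_of_notMem hnot]
    · have hk0 : W.β n ω ∈ Finset.Icc 1 n := hβ
      have hLHS : ‖W.X (n + 1) ω‖ ^ 2 = ‖W.X (W.β n ω) ω‖ ^ 2 := by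
        rw [norm_sq_eq, norm_sq_eq]
        calc ∑ i, W.X (n + 1) ω i ^ 2
            = ∑ i, (∑ j, moveMat d si0 i j * W.X (W.β n ω) ω j) ^ 2 := by
              refine Finset.sum_congr rfl fun i _ => ?_
              rw [W.hrec n hn ω i, hsi0]
          _ = ∑ j, W.X (W.β n ω) ω j ^ 2 := moveMat_sum_sq si0 _
      rw [hLHS]
      symm
      rw [Finset.sum_eq_single (W.β n ω, si0)]
      · have hmem : ω ∈ S (W.β n ω, si0) := ⟨rfl, hsi0⟩
        simp [hF_def, Set.indicator_of_mem hmem]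
      · intro ksi _ hne
        have hnot : ω ∉ S ksi := by
          intro hin
          apply hne
          have h1 : ksi.1 = W.β n ω := (hin.1 : _ = _).symm
          have h2 : ksi.2 = si0 := moveMat_injective W.hd0 ((hin.2 : _ = _).symm.trans hsi0)
          rw [← h1, ← h2]
        simp [hF_def, Set.indicator_of_notMem hnot]
      · intro habs
        exact absurd (Finset.mem_product.mpr ⟨hk0, Finset.mem_univ si0⟩) habs
  -- integrability of each term
  have hSmeas : ∀ ksi, MeasurableSet (S ksi) := fun ksi =>
    ((W.measβ n) (measurableSet_singleton ksi.1)).inter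
      ((W.measA (n + 1)) (measurableSet_singleton (moveMat d ksi.2)))
  have hintF : ∀ ksi ∈ s, Integrable (F ksi) P := by
    intro ksi hksi
    have hk1 : 1 ≤ ksi.1 := (Finset.mem_Icc.mp (Finset.mem_product.mp hksi).1).1
    refine (integrable_const (1 : ℝ)).mono' ?_ ?_
    · exact (((W.measX ksi.1).norm.pow_const 2).mul
        (measurable_const.indicator (hSmeas ksi))).aestronglyMeasurable
    · filter_upwards [W.norm_bound ksi.1] with ω h
      have h1 : ‖W.X ksi.1 ω‖ ^ 2 ≤ 1 := pow_le_one₀ (norm_nonneg _) (h hk1)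
      have h2 : (S ksi).indicator (fun _ => (1:ℝ)) ω ≤ 1 := by
        rw [Set.indicator_apply]; split_ifs <;> norm_num
      have h3 : 0 ≤ (S ksi).indicator (fun _ => (1:ℝ)) ω := by
        rw [Set.indicator_apply]; split_ifs <;> norm_num
      rw [Real.norm_eq_abs, abs_of_nonneg (mul_nonneg (by positivity) h3)]
      calc ‖W.X ksi.1 ω‖ ^ 2 * (S ksi).indicator (fun _ => (1:ℝ)) ω
          ≤ 1 * 1 := mul_le_mul h1 h2 h3 zero_le_one
        _ = 1 := mul_one 1
  -- conditional expectation of each term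
  have hcond : ∀ ksi ∈ s, P[F ksi | W.G n] =ᵐ[P]
      fun ω => ((1 / (n:ℝ)) * cprob p q W.hd0 ksi.2) * ‖W.X ksi.1 ω‖ ^ 2 := by
    intro ksi hksi
    obtain ⟨hk, -⟩ := Finset.mem_product.mp hksi
    have hSm : MeasurableSet[MeasurableSpace.comap (W.A (n + 1)) inferInstance ⊔
        MeasurableSpace.comap (W.β n) inferInstance] (S ksi) := by
      have hle1 : MeasurableSpace.comap (W.β n) inferInstance ≤
          MeasurableSpace.comap (W.A (n + 1)) inferInstance ⊔
          MeasurableSpace.comap (W.β n) inferInstance := le_sup_right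
      have hle2 : MeasurableSpace.comap (W.A (n + 1)) inferInstance ≤
          MeasurableSpace.comap (W.A (n + 1)) inferInstance ⊔
          MeasurableSpace.comap (W.β n) inferInstance := le_sup_left
      exact (hle1 _ ⟨{ksi.1}, measurableSet_singleton _, rfl⟩).inter
        (hle2 _ ⟨{moveMat d ksi.2}, measurableSet_singleton _, rfl⟩)
    have h := condexp_mul_indicator (W.hGle n)
      (sup_le (W.measA (n + 1)).comap_le (W.measβ n).comap_le)
      (W.indep_sup n hn) hSm (W.smsq hk) (hintF ksi hksi)
    have hPS : (P (S ksi)).toReal = (1 / (n:ℝ)) * cprob p q W.hd0 ksi.2 := by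
      have hβk : P {ω | W.β n ω = ksi.1} = ENNReal.ofReal (1 / (n:ℝ)) := W.hβ n hn ksi.1 hk
      have h2 : P (S ksi) =
          P {ω | W.A (n + 1) ω = moveMat d ksi.2} * P {ω | W.β n ω = ksi.1} := by
        rw [show S ksi = {ω | W.β n ω = ksi.1} ∩ {ω | W.A (n + 1) ω = moveMat d ksi.2} from rfl,
          Set.inter_comm]
        exact ((Indep_iff _ _ _).mp (W.indep_Aβ n hn)) _ _
          ⟨{moveMat d ksi.2}, measurableSet_singleton _, rfl⟩
          ⟨{ksi.1}, measurableSet_singleton _, rfl⟩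
      rw [h2, W.probA n hn ksi.2, hβk,
        ← ENNReal.ofReal_mul (cprob_nonneg W.hp.1 W.hq.1 W.hd0 ksi.2),
        ENNReal.toReal_ofReal (mul_nonneg (cprob_nonneg W.hp.1 W.hq.1 W.hd0 ksi.2)
          (by positivity))]
      ring
    refine h.trans (Filter.EventuallyEq.of_eq ?_)
    funext ω
    rw [hPS]
  -- assemble
  have hc : ∑ si : Fin 2 × Fin d, cprob p q W.hd0 si = 1 - r := by
    rw [cprob_sum]; linarith [W.hpqr]
  calc P[(fun ω => ‖W.X (n + 1) ω‖ ^ 2) | W.G n]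
      =ᵐ[P] P[(∑ ksi ∈ s, F ksi) | W.G n] := by
        refine condExp_congr_ae (hdecomp.trans (Filter.EventuallyEq.of_eq ?_))
        funext ω
        simp [Finset.sum_apply]
    _ =ᵐ[P] ∑ ksi ∈ s, P[F ksi | W.G n] := condExp_finset_sum hintF (W.G n)
    _ =ᵐ[P] fun ω => ((1 - r) / n) * W.Zstar n ω := by
        have hsum := (ae_ball_iff s.countable_toSet).mpr
          (fun ksi (hksi : ksi ∈ (s : Set (ℕ × (Fin 2 × Fin d)))) => hcond ksi hksi)
        filter_upwards [hsum] with ω hω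
        rw [Finset.sum_apply]
        rw [Finset.sum_congr rfl (fun ksi hksi => hω ksi (Finset.mem_coe.mpr hksi))]
        rw [Finset.sum_product]
        have hinner : ∀ k, ∑ si : Fin 2 × Fin d,
            ((1 / (n:ℝ)) * cprob p q W.hd0 si) * ‖W.X k ω‖ ^ 2
            = ((1 - r) / n) * ‖W.X k ω‖ ^ 2 := by
          intro k
          rw [← Finset.sum_mul, ← Finset.mul_sum, hc]
          ring
        rw [Finset.sum_congr rfl (fun k _ => hinner k), ← Finset.mul_sum]
        rfl

end MERWStops

namespace MERWStops

open MERWAux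

variable {Ω : Type*} [MeasurableSpace Ω] {P : Measure Ω} {d : ℕ} {p q r : ℝ}

lemma partB (W : MERWStops P d p q r) [IsProbabilityMeasure P] (n : ℕ) (hn : 1 ≤ n) :
    P[W.Zstar (n + 1) | W.G n] =ᵐ[P] fun ω => (1 + (1 - r) / n) * W.Zstar n ω := by
  have hsplit : W.Zstar (n + 1) = fun ω => W.Zstar n ω + ‖W.X (n + 1) ω‖ ^ 2 := by
    funext ω
    exact Finset.sum_Icc_succ_top (a := 1) (b := n) (by omega) _
  calc P[W.Zstar (n + 1) | W.G n]
      =ᵐ[P] P[(W.Zstar n + fun ω => ‖W.X (n + 1) ω‖ ^ 2) | W.G n] := by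
        rw [hsplit]; rfl
    _ =ᵐ[P] P[W.Zstar n | W.G n] + P[(fun ω => ‖W.X (n + 1) ω‖ ^ 2) | W.G n] :=
        condExp_add (W.intZ n) (W.intX (n + 1) (by omega)) (W.G n)
    _ =ᵐ[P] fun ω => (1 + (1 - r) / n) * W.Zstar n ω := by
        have h1 : P[W.Zstar n | W.G n] = W.Zstar n :=
          condExp_of_stronglyMeasurable (W.hGle n) (W.smZ n) (W.intZ n)
        filter_upwards [W.partA n hn] with ω hω
        rw [Pi.add_apply, h1, hω]
        ring

lemma partC (W : MERWStops P d p q r) [IsProbabilityMeasure P] (n : ℕ) (hn : 1 ≤ n) :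
    ∫ ω, W.Zstar n ω ∂P =
      Real.Gamma ((n : ℝ) + 1 - r) / (Real.Gamma (2 - r) * Real.Gamma (n : ℝ)) := by
  have hΓ2r : Real.Gamma (2 - r) ≠ 0 :=
    (Real.Gamma_pos_of_pos (by linarith [W.hr.2])).ne'
  induction n, hn using Nat.le_induction with
  | base =>
    have hZ1 : W.Zstar 1 = fun ω => ‖W.X 1 ω‖ ^ 2 := by
      funext ω
      show ∑ k ∈ Finset.Icc 1 1, ‖W.X k ω‖ ^ 2 = _
      rw [Finset.Icc_self, Finset.sum_singleton]
    rw [hZ1]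
    have h1 : ∫ ω, ‖W.X 1 ω‖ ^ 2 ∂P = ∫ _ω, (1:ℝ) ∂P := by
      apply integral_congr_ae
      filter_upwards [W.ae_X1] with ω hω
      rw [hω, one_pow]
    rw [h1, integral_const, probReal_univ]
    norm_num
    exact (div_self hΓ2r).symm
  | succ n hn1 ih =>
    have hne1 : ((n:ℝ)) ≠ 0 := by
      have : (1:ℝ) ≤ (n:ℝ) := by exact_mod_cast hn1
      linarith
    have hΓn : Real.Gamma (n:ℝ) ≠ 0 := by
      apply (Real.Gamma_pos_of_pos ?_).ne'
      have : (1:ℝ) ≤ (n:ℝ) := by exact_mod_cast hn1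
      linarith
    have hstep : ∫ ω, W.Zstar (n + 1) ω ∂P = (1 + (1 - r) / n) * ∫ ω, W.Zstar n ω ∂P := by
      rw [← integral_condExp (W.hGle n) (f := W.Zstar (n + 1))]
      rw [integral_congr_ae (W.partB n hn1)]
      rw [integral_const_mul]
    rw [hstep, ih]
    have hc1 : ((n + 1 : ℕ) : ℝ) + 1 - r = ((n:ℝ) + 1 - r) + 1 := by push_cast; ring
    have hc2 : ((n + 1 : ℕ) : ℝ) = (n:ℝ) + 1 := by push_cast; ring
    rw [hc1, hc2, Real.Gamma_add_one (by
      have : (1:ℝ) ≤ (n:ℝ) := by exact_mod_cast hn1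
      have : 0 < (n:ℝ) + 1 - r := by linarith [W.hr.2]
      exact this.ne'), Real.Gamma_add_one hne1]
    field_simp
    ring

end MERWStops

/-- In the MERW with stops, for every `n ≥ 1`,
`E(‖X_{n+1}‖² | G_n) = ((1-r)/n) Z_n*` a.s., hence
`E(Z_{n+1}* | G_n) = (1 + (1-r)/n) Z_n*` a.s., and
`E(Z_n*) = Γ(n+1-r)/(Γ(2-r) Γ(n))`. -/
theorem merwStops_conditional_mean_moves
    {Ω : Type*} [MeasurableSpace Ω] {P : Measure Ω} [IsProbabilityMeasure P]
    {d : ℕ} {p q r : ℝ} (W : MERWStops P d p q r) :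
    (∀ n, 1 ≤ n →
      P[(fun ω => ‖W.X (n + 1) ω‖ ^ 2) | W.G n]
        =ᵐ[P] fun ω => ((1 - r) / n) * W.Zstar n ω) ∧
    (∀ n, 1 ≤ n →
      P[W.Zstar (n + 1) | W.G n]
        =ᵐ[P] fun ω => (1 + (1 - r) / n) * W.Zstar n ω) ∧
    (∀ n, 1 ≤ n →
      ∫ ω, W.Zstar n ω ∂P =
        Real.Gamma ((n : ℝ) + 1 - r) / (Real.Gamma (2 - r) * Real.Gamma (n : ℝ))) :=
  ⟨W.partA, W.partB, W.partC⟩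
end
end
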